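/- arXiv:1711.01637 — 9 statements merged into one kernel-verified Lean document; each statement's English description precedes it below -/
import Mathlib

section
/- Let η ∈ ℝⁿ with η > 0 componentwise, r ∈ ℝ₊ⁿ, and let c₁,…,cₙ be independent random variables with cᵢ uniformly distributed on an interval of length ηᵢ. Define N(c, r) as the number of grid points p ∈ ηℤⁿ (i.e., pᵢ = kᵢηᵢ for integers kᵢ) with p ∈ [c − r, c + r] (componentwise). Then the expected value of N(c, r) equals ∏ᵢ₌₁ⁿ (2rᵢ/ηᵢ). -/
open MeasureTheory

/-- Number of grid points `p ∈ ηℤⁿ` with `c - r ≤ p ≤ c + r` componentwise. -/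
noncomputable def NcountGrid {n : ℕ} (η c r : Fin n → ℝ) : ℕ :=
  ∏ i, (Finset.Icc ⌈(c i - r i) / η i⌉ ⌊(c i + r i) / η i⌋).card

lemma integral_fract_unit (b : ℝ) : ∫ x in b..(b+1), Int.fract x = 1/2 := by
  have hp : Function.Periodic (Int.fract : ℝ → ℝ) 1 := fun x => Int.fract_add_one x
  rw [hp.intervalIntegral_add_eq b 0, zero_add]
  have h : ∫ x in (0:ℝ)..1, Int.fract x = ∫ x in (0:ℝ)..1, x := by
    apply intervalIntegral.integral_congr_ae
    have h1 : ∀ᵐ (x : ℝ), x ≠ 1 := by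
      rw [MeasureTheory.ae_iff]
      have : {x : ℝ | ¬ x ≠ 1} = {1} := by ext x; simp
      rw [this]
      exact Real.volume_singleton
    filter_upwards [h1] with x hx hmem
    rw [Set.uIoc_of_le (by norm_num : (0:ℝ) ≤ 1)] at hmem
    exact Int.fract_eq_self.2 ⟨hmem.1.le, lt_of_le_of_ne hmem.2 hx⟩
  rw [h, integral_id]; norm_num

lemma ii_fract_comp (g : ℝ → ℝ) (hg : Measurable g) (p q : ℝ) :
    IntervalIntegrable (fun x => Int.fract (g x)) volume p q := by
  apply (intervalIntegrable_const (μ := volume) (a := p) (b := q) (c := (1:ℝ))).mono_fun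
  · exact ((measurable_fract.comp hg).aestronglyMeasurable)
  · filter_upwards with x
    rw [Real.norm_eq_abs, norm_one, abs_of_nonneg (Int.fract_nonneg _)]
    exact (Int.fract_lt_one _).le

lemma integral_fract_comp (a η r : ℝ) (hη : 0 < η) :
    ∫ x in a..(a+η), Int.fract ((x + r)/η) = η / 2 := by
  have h1 : (fun x : ℝ => Int.fract ((x + r)/η))
      = fun x : ℝ => (fun y : ℝ => Int.fract (y + r/η)) (x / η) := by
    funext x; simp [add_div]
  rw [h1, intervalIntegral.integral_comp_div (f := fun y => Int.fract (y + r/η)) hη.ne',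
    intervalIntegral.integral_comp_add_right]
  have h2 : (a+η)/η + r/η = (a/η + r/η) + 1 := by field_simp; ring
  rw [h2, integral_fract_unit, smul_eq_mul]
  ring

lemma card_eq_fract (η r c : ℝ) (hη : 0 < η) (hr : 0 ≤ r) :
    ((Finset.Icc ⌈(c - r)/η⌉ ⌊(c + r)/η⌋).card : ℝ)
      = (2*r/η + 1) - Int.fract ((c + r)/η) - Int.fract ((r - c)/η) := by
  have hmono : ((c - r)/η) ≤ ((c + r)/η) := by
    exact (div_le_div_iff_of_pos_right hη).2 (by linarith)
  have h1 : ⌈(c - r)/η⌉ ≤ ⌊(c + r)/η⌋ + 1 :=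
    le_trans (Int.ceil_le_floor_add_one _) (add_le_add_left (Int.floor_le_floor hmono) 1)
  rw [Int.card_Icc]
  have h2 : (((⌊(c + r)/η⌋ + 1 - ⌈(c - r)/η⌉).toNat : ℕ) : ℝ)
      = ((⌊(c + r)/η⌋ : ℝ) + 1 - (⌈(c - r)/η⌉ : ℝ)) := by
    rw [← Int.cast_natCast, Int.toNat_of_nonneg (by omega)]; push_cast; ring
  rw [h2]
  have hu : (⌊(c + r)/η⌋ : ℝ) = (c+r)/η - Int.fract ((c+r)/η) := by
    rw [Int.self_sub_fract]
  have hv : (⌈(c - r)/η⌉ : ℝ) = (c-r)/η + Int.fract (-((c-r)/η)) := by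
    have := Int.floor_neg (a := (c - r)/η)
    have hf : (⌊-((c-r)/η)⌋ : ℝ) = -((c-r)/η) - Int.fract (-((c-r)/η)) := by
      rw [Int.self_sub_fract]
    have : (⌈(c - r)/η⌉ : ℝ) = -(⌊-((c-r)/η)⌋ : ℝ) := by
      rw [Int.floor_neg]; push_cast; ring
    rw [this, hf]; ring
  have hneg : -((c-r)/η) = (r - c)/η := by ring
  rw [hu, hv, hneg]
  have : (c+r)/η - (c-r)/η = 2*r/η := by field_simp; ring
  linarith [this]

lemma coord_integral (η r a : ℝ) (hη : 0 < η) (hr : 0 ≤ r) :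
    ∫ c, ((Finset.Icc ⌈(c - r)/η⌉ ⌊(c + r)/η⌋).card : ℝ)
      ∂((ENNReal.ofReal η)⁻¹ • volume.restrict (Set.Icc a (a+η))) = 2*r/η := by
  rw [integral_smul_measure]
  have htr : ((ENNReal.ofReal η)⁻¹).toReal = η⁻¹ := by
    rw [ENNReal.toReal_inv, ENNReal.toReal_ofReal hη.le]
  rw [htr]
  have hle : a ≤ a + η := by linarith
  have hIcc : ∫ c in Set.Icc a (a+η), ((Finset.Icc ⌈(c - r)/η⌉ ⌊(c + r)/η⌋).card : ℝ)
      = ∫ c in a..(a+η), ((Finset.Icc ⌈(c - r)/η⌉ ⌊(c + r)/η⌋).card : ℝ) := by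
    rw [intervalIntegral.integral_of_le hle, MeasureTheory.integral_Icc_eq_integral_Ioc]
  rw [hIcc]
  have key : ∫ c in a..(a+η), ((Finset.Icc ⌈(c - r)/η⌉ ⌊(c + r)/η⌋).card : ℝ) = 2*r := by
    rw [intervalIntegral.integral_congr
      (g := fun c => (2*r/η + 1) - Int.fract ((c + r)/η) - Int.fract ((r - c)/η))
      (fun c _ => card_eq_fract η r c hη hr)]
    have i1 : IntervalIntegrable (fun c : ℝ => Int.fract ((c + r)/η)) volume a (a+η) :=
      ii_fract_comp _ (by fun_prop) _ _
    have i2 : IntervalIntegrable (fun c : ℝ => Int.fract ((r - c)/η)) volume a (a+η) :=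
      ii_fract_comp _ (by fun_prop) _ _
    rw [intervalIntegral.integral_sub ((intervalIntegrable_const).sub i1) i2,
      intervalIntegral.integral_sub intervalIntegrable_const i1,
      intervalIntegral.integral_const]
    have e1 : ∫ c in a..(a+η), Int.fract ((c + r)/η) = η / 2 := integral_fract_comp a η r hη
    have e2 : ∫ c in a..(a+η), Int.fract ((r - c)/η) = η / 2 := by
      have h3 : ∫ c in a..(a+η), Int.fract ((r - c)/η)
          = ∫ c in a..(a+η), (fun x => Int.fract ((x + r)/η)) (-c) := by
        apply intervalIntegral.integral_congr
        intro x _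
        simp only
        ring_nf
      rw [h3, intervalIntegral.integral_comp_neg (fun x => Int.fract ((x + r)/η))]
      have hb : -a = -(a+η) + η := by ring
      rw [hb, integral_fract_comp (-(a+η)) η r hη]
    rw [e1, e2, smul_eq_mul]
    field_simp
    ring
  rw [key, smul_eq_mul]
  field_simp

lemma pi_integral_prod {n : ℕ} (μ : Fin n → Measure ℝ) (h : ∀ i, SigmaFinite (μ i))
    (f : Fin n → ℝ → ℝ) :
    ∫ x : Fin n → ℝ, ∏ i, f i (x i) ∂Measure.pi μ = ∏ i, ∫ x, f i x ∂μ i :=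
  @MeasureTheory.integral_fin_nat_prod_eq_prod ℝ _ n (fun _ => ℝ) (fun _ => inferInstance) μ h f

theorem stmt2 {n : ℕ} (η r a : Fin n → ℝ) (hη : ∀ i, 0 < η i)
    (hr : ∀ i, 0 ≤ r i)
    -- `μ` is the joint law of the independent uniform random variables `cᵢ`,
    -- `cᵢ` uniformly distributed on an interval of length `ηᵢ` starting at `a i`:
    (μ : Measure (Fin n → ℝ))
    (hμ : μ = Measure.pi fun i =>
      (ENNReal.ofReal (η i))⁻¹ • volume.restrict (Set.Icc (a i) (a i + η i))) :
    ∫ c, (NcountGrid η c r : ℝ) ∂μ = ∏ i, 2 * r i / η i := by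
  subst hμ
  have hsf : ∀ i, SigmaFinite
      ((ENNReal.ofReal (η i))⁻¹ • volume.restrict (Set.Icc (a i) (a i + η i))) := by
    intro i
    have : IsFiniteMeasure
        ((ENNReal.ofReal (η i))⁻¹ • volume.restrict (Set.Icc (a i) (a i + η i))) := by
      constructor
      rw [Measure.smul_apply, Measure.restrict_apply MeasurableSet.univ, Set.univ_inter,
        Real.volume_Icc, smul_eq_mul]
      simp only [add_sub_cancel_left]
      exact (ENNReal.inv_mul_cancel ((ENNReal.ofReal_pos.2 (hη i)).ne') ENNReal.ofReal_ne_top).le.trans_lt ENNReal.one_lt_top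
    infer_instance
  have hcast : ∀ c : Fin n → ℝ, (NcountGrid η c r : ℝ)
      = ∏ i, ((Finset.Icc ⌈(c i - r i) / η i⌉ ⌊(c i + r i) / η i⌋).card : ℝ) := by
    intro c; unfold NcountGrid; push_cast; rfl
  simp_rw [hcast]
  rw [pi_integral_prod _ hsf
    (fun i x => ((Finset.Icc ⌈(x - r i) / η i⌉ ⌊(x + r i) / η i⌋).card : ℝ))]
  exact Finset.prod_congr rfl fun i _ => coord_integral (η i) (r i) (a i) (hη i) (hr i)
end

section
/- Let n ≥ 1, A ∈ ℝ₊^{n×n}, p ∈ ℝ₊ⁿ, and define g : ℝⁿ → ℝ by g(x) = ∏ᵢ₌₁ⁿ e^{−xᵢ}(pᵢ + Σⱼ A_{i,j} e^{xⱼ}). Then g is convex on ℝⁿ. -/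
noncomputable def g {n : ℕ} (A : Matrix (Fin n) (Fin n) ℝ) (p : Fin n → ℝ)
    (x : Fin n → ℝ) : ℝ :=
  ∏ i, Real.exp (-(x i)) * (p i + ∑ j, A i j * Real.exp (x j))

/-- coefficient of a term -/
def coefAux {n : ℕ} (A : Matrix (Fin n) (Fin n) ℝ) (p : Fin n → ℝ)
    (i : Fin n) (o : Option (Fin n)) : ℝ :=
  match o with
  | none => p i
  | some j => A i j

/-- linear part of a term -/
def linAux {n : ℕ} (i : Fin n) (o : Option (Fin n)) : (Fin n → ℝ) →ₗ[ℝ] ℝ :=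
  match o with
  | none => -(LinearMap.proj i)
  | some j => (LinearMap.proj j : (Fin n → ℝ) →ₗ[ℝ] ℝ) - LinearMap.proj i

lemma sum_convexOn {ι E : Type*} [AddCommMonoid E] [Module ℝ E] (s : Finset ι)
    (f : ι → E → ℝ) (hf : ∀ i ∈ s, ConvexOn ℝ Set.univ (f i)) :
    ConvexOn ℝ Set.univ (fun x => ∑ i ∈ s, f i x) := by
  classical
  induction s using Finset.induction with
  | empty => simpa using convexOn_const (0 : ℝ) convex_univ
  | @insert a t hx ih =>
    simp only [Finset.sum_insert hx]
    exact (hf a (Finset.mem_insert_self a t)).add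
      (ih fun i hi => hf i (Finset.mem_insert_of_mem hi))

theorem stmt3 {n : ℕ} (hn : 1 ≤ n) (A : Matrix (Fin n) (Fin n) ℝ)
    (p : Fin n → ℝ) (hA : ∀ i j, 0 ≤ A i j) (hp : ∀ i, 0 ≤ p i) :
    ConvexOn ℝ Set.univ (g A p) := by
  classical
  have hg : g A p = fun x => ∑ σ ∈ Fintype.piFinset (fun _ : Fin n => (Finset.univ : Finset (Option (Fin n)))),
      (∏ i, coefAux A p i (σ i)) * Real.exp (∑ i, linAux i (σ i) x) := by
    funext x
    unfold g
    have hfac : ∀ i : Fin n,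
        Real.exp (-(x i)) * (p i + ∑ j, A i j * Real.exp (x j))
          = ∑ o : Option (Fin n), coefAux A p i o * Real.exp (linAux i o x) := by
      intro i
      rw [Fintype.sum_option]
      simp only [coefAux, linAux, LinearMap.neg_apply, LinearMap.proj_apply,
        LinearMap.sub_apply]
      rw [Real.exp_neg, mul_add, Finset.mul_sum]
      congr 1
      · ring
      · exact Finset.sum_congr rfl fun j _ => by rw [Real.exp_sub]; ring
    calc ∏ i, Real.exp (-(x i)) * (p i + ∑ j, A i j * Real.exp (x j))
        = ∏ i, ∑ o : Option (Fin n), coefAux A p i o * Real.exp (linAux i o x) := by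
          exact Finset.prod_congr rfl fun i _ => hfac i
      _ = ∑ σ ∈ Fintype.piFinset (fun _ : Fin n => (Finset.univ : Finset (Option (Fin n)))),
            ∏ i, coefAux A p i (σ i) * Real.exp (linAux i (σ i) x) := by
          exact Finset.prod_univ_sum _ _
      _ = _ := by
          apply Finset.sum_congr rfl
          intro σ _
          rw [Finset.prod_mul_distrib, ← Real.exp_sum]
  rw [hg]
  apply sum_convexOn
  intro σ _
  have hc : 0 ≤ ∏ i, coefAux A p i (σ i) := by
    apply Finset.prod_nonneg
    intro i _
    cases h : σ i with
    | none => exact hp i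
    | some j => exact hA i j
  have hL : ConvexOn ℝ Set.univ (fun x : Fin n → ℝ => Real.exp (∑ i, linAux i (σ i) x)) := by
    have := convexOn_exp.comp_affineMap
      (LinearMap.toAffineMap (∑ i, linAux i (σ i) : (Fin n → ℝ) →ₗ[ℝ] ℝ))
    simpa [Function.comp_def, LinearMap.sum_apply] using this
  exact hL.smul hc
end

section
/- Let n ≥ 2, A ∈ ℝ₊^{n×n} with all diagonal entries positive, p ∈ ℝ₊ⁿ, γ ∈ ℝ, and suppose A is irreducible or the (n+1)×(n+1) matrix à = [[A, p],[𝟙ᵀ, 1]] (last row all ones) is irreducible. Define g(x) = ∏ᵢ e^{−xᵢ}(pᵢ + Σⱼ A_{i,j} e^{xⱼ}) and V_γ = {x ∈ ℝⁿ : Σᵢ xᵢ = γ}. Then for every x ∈ V_γ and every nonzero h with Σᵢ hᵢ = 0, the second directional derivative satisfies g''(x)h² > 0; in particular g is strictly convex on V_γ. -/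
def Irred {m : ℕ} (M : Matrix (Fin m) (Fin m) ℝ) : Prop :=
  ∀ r s : Fin m, r ≠ s → ∃ (k : ℕ) (i : Fin (k+1) → Fin m),
    Function.Injective i ∧ i 0 = r ∧ i (Fin.last k) = s ∧
    ∀ j : Fin k, 0 < M (i j.castSucc) (i j.succ)

/-- The augmented matrix [[A, p],[𝟙ᵀ, 1]]. -/
def aug {n : ℕ} (A : Matrix (Fin n) (Fin n) ℝ) (p : Fin n → ℝ) :
    Matrix (Fin (n+1)) (Fin (n+1)) ℝ := fun i j =>
  if hi : (i : ℕ) < n then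
    (if hj : (j : ℕ) < n then A ⟨i, hi⟩ ⟨j, hj⟩ else p ⟨i, hi⟩)
  else 1

/- ### Auxiliary material -/

noncomputable def cc {n : ℕ} (A : Matrix (Fin n) (Fin n) ℝ) (p : Fin n → ℝ)
    (x : Fin n → ℝ) (i : Fin n) : Option (Fin n) → ℝ
  | none => p i * Real.exp (-(x i))
  | some j => A i j * Real.exp (x j - x i)

def ee {n : ℕ} (h : Fin n → ℝ) (i : Fin n) : Option (Fin n) → ℝ
  | none => -(h i)
  | some j => h j - h i

lemma cc_nonneg {n : ℕ} {A : Matrix (Fin n) (Fin n) ℝ} {p : Fin n → ℝ}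
    (hA : ∀ i j, 0 ≤ A i j) (hp : ∀ i, 0 ≤ p i) (x : Fin n → ℝ)
    (i : Fin n) (o : Option (Fin n)) : 0 ≤ cc A p x i o := by
  cases o with
  | none => have := hp i; simp only [cc]; positivity
  | some j => have := hA i j; simp only [cc]; positivity

lemma factor_eq {n : ℕ} (A : Matrix (Fin n) (Fin n) ℝ) (p : Fin n → ℝ)
    (x h : Fin n → ℝ) (t : ℝ) (i : Fin n) :
    Real.exp (-(x i + t * h i)) * (p i + ∑ j, A i j * Real.exp (x j + t * h j))
    = ∑ o : Option (Fin n), cc A p x i o * Real.exp (ee h i o * t) := by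
  rw [Fintype.sum_option]
  simp only [cc, ee, mul_add, Finset.mul_sum]
  congr 1
  · rw [mul_comm (Real.exp _) (p i), mul_assoc, ← Real.exp_add]
    ring_nf
  · refine Finset.sum_congr rfl fun j _ => ?_
    rw [mul_comm (Real.exp _), mul_assoc, ← Real.exp_add, mul_assoc, ← Real.exp_add]
    ring_nf

lemma expand {n : ℕ} (A : Matrix (Fin n) (Fin n) ℝ) (p : Fin n → ℝ)
    (x h : Fin n → ℝ) (t : ℝ) :
    g A p (x + t • h) = ∑ σ : Fin n → Option (Fin n),
      (∏ i, cc A p x i (σ i)) * Real.exp ((∑ i, ee h i (σ i)) * t) := by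
  have : g A p (x + t • h)
      = ∏ i, ∑ o : Option (Fin n), cc A p x i o * Real.exp (ee h i o * t) := by
    refine Finset.prod_congr rfl fun i _ => ?_
    rw [← factor_eq]
    simp [Pi.add_apply, mul_comm]
  rw [this, Fintype.prod_sum]
  refine Finset.sum_congr rfl fun σ _ => ?_
  rw [Finset.prod_mul_distrib]
  congr 1
  rw [← Real.exp_sum, Finset.sum_mul]

lemma chainA {n : ℕ} {A : Matrix (Fin n) (Fin n) ℝ} {h : Fin n → ℝ}
    (hirr : Irred A)
    (H1 : ∀ i j, 0 < A i j → h j = h i) (r s : Fin n) : h r = h s := by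
  rcases eq_or_ne r s with rfl | hne
  · rfl
  obtain ⟨k, i, -, h0, hl, hpos⟩ := hirr r s hne
  have key : ∀ j : Fin (k+1), h (i j) = h r := by
    intro j
    induction j using Fin.induction with
    | zero => rw [h0]
    | succ j ih =>
      rw [H1 (i j.castSucc) (i j.succ) (hpos j)]
      exact ih
  rw [← hl, key]

lemma chainAug {n : ℕ} {A : Matrix (Fin n) (Fin n) ℝ} {p h : Fin n → ℝ}
    (hirr : Irred (aug A p))
    (H1 : ∀ i j, 0 < A i j → h j = h i) (H2 : ∀ i, 0 < p i → h i = 0)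
    (r : Fin n) : h r = 0 := by
  have hrs : (r.castSucc : Fin (n+1)) ≠ Fin.last n := (Fin.castSucc_lt_last r).ne
  obtain ⟨k, i, hinj, h0, hl, hpos⟩ := hirr r.castSucc (Fin.last n) hrs
  have hlt : ∀ j : Fin (k+1), j ≠ Fin.last k → ((i j : ℕ) < n) := by
    intro j hj
    have h1 : i j ≠ Fin.last n := by rw [← hl]; exact fun e => hj (hinj e)
    have h2 : (i j : ℕ) ≠ n := fun e => h1 (Fin.ext (by simpa using e))
    have h3 : (i j : ℕ) < n + 1 := (i j).isLt
    omega
  have claim : ∀ j : Fin (k+1), ∀ hj : ((i j : ℕ) < n), h ⟨(i j : ℕ), hj⟩ = h r := by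
    intro j
    induction j using Fin.induction with
    | zero =>
      intro hj
      congr 1
      apply Fin.ext
      simp [h0]
    | succ j ih =>
      intro hj
      have hjc : ((i j.castSucc : ℕ) < n) := hlt _ (Fin.castSucc_lt_last j).ne
      have hedge := hpos j
      rw [aug, dif_pos hjc, dif_pos hj] at hedge
      rw [H1 _ _ hedge]
      exact ih hjc
  match k, i, hinj, h0, hl, hpos, hlt, claim with
  | 0, i, hinj, h0, hl, hpos, hlt, claim =>
    exact absurd (h0.symm.trans hl) hrs
  | (k'+1), i, hinj, h0, hl, hpos, hlt, claim =>
    have hjc : ((i (Fin.last k').castSucc : ℕ) < n) := hlt _ (Fin.castSucc_lt_last _).ne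
    have hedge := hpos (Fin.last k')
    have hsucc : (Fin.last k').succ = Fin.last (k'+1) := rfl
    rw [hsucc, hl] at hedge
    rw [aug, dif_pos hjc, dif_neg (by simp)] at hedge
    have := H2 _ hedge
    rw [claim _ hjc] at this
    exact this

lemma exists_bad {n : ℕ} (hn : 2 ≤ n) {A : Matrix (Fin n) (Fin n) ℝ}
    {p h : Fin n → ℝ}
    (hirr : Irred A ∨ Irred (aug A p))
    (hsum : (∑ i, h i) = 0) (hne : h ≠ 0) :
    ∃ i0 : Fin n, (∃ j, 0 < A i0 j ∧ h j ≠ h i0) ∨ (0 < p i0 ∧ h i0 ≠ 0) := by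
  by_contra hc
  push_neg at hc
  have H1 : ∀ i j, 0 < A i j → h j = h i := by
    intro i j hij
    by_contra hne'
    exact absurd ((hc i).1 j hij) (by simpa using hne')
  have H2 : ∀ i, 0 < p i → h i = 0 := by
    intro i hi
    by_contra hne'
    exact absurd ((hc i).2 hi) (by simpa using hne')
  rcases hirr with hirr | hirr
  · have z : Fin n := ⟨0, by omega⟩
    have hconst : ∀ r, h r = h z := fun r => chainA hirr H1 r z
    have heq : (0:ℝ) = n * h z := by
      rw [← hsum, Finset.sum_congr rfl fun i _ => hconst i]
      simp [Finset.sum_const, mul_comm]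
    have hn0 : (n:ℝ) ≠ 0 := Nat.cast_ne_zero.mpr (by omega)
    have h00 : h z = 0 := by
      rcases mul_eq_zero.mp heq.symm with h' | h'
      · exact absurd h' hn0
      · exact h'
    apply hne
    funext r
    rw [hconst r, h00]
    rfl
  · apply hne
    funext r
    exact chainAug hirr H1 H2 r

lemma witness {n : ℕ} (hn : 2 ≤ n) {A : Matrix (Fin n) (Fin n) ℝ}
    {p : Fin n → ℝ} (x : Fin n → ℝ) {h : Fin n → ℝ}
    (hp : ∀ i, 0 ≤ p i) (hdiag : ∀ i, 0 < A i i)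
    (hirr : Irred A ∨ Irred (aug A p))
    (hsum : (∑ i, h i) = 0) (hne : h ≠ 0) :
    ∃ σ : Fin n → Option (Fin n),
      0 < (∏ i, cc A p x i (σ i)) ∧ (∑ i, ee h i (σ i)) ≠ 0 := by
  obtain ⟨i0, hcase⟩ := exists_bad hn hirr hsum hne
  obtain ⟨o0, hpos, hene⟩ :
      ∃ o0 : Option (Fin n), 0 < cc A p x i0 o0 ∧ ee h i0 o0 ≠ 0 := by
    rcases hcase with ⟨j, hAj, hj⟩ | ⟨hpi, hi⟩
    · exact ⟨some j, by simp only [cc]; positivity, sub_ne_zero.mpr hj⟩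
    · exact ⟨none, by simp only [cc]; positivity, neg_ne_zero.mpr hi⟩
  refine ⟨Function.update (fun i => some i) i0 o0, ?_, ?_⟩
  · apply Finset.prod_pos
    intro i _
    rcases eq_or_ne i i0 with rfl | hii
    · simpa using hpos
    · rw [Function.update_of_ne hii]
      have := hdiag i
      simp only [cc]
      positivity
  · rw [Fintype.sum_eq_single i0 (fun b hb => by
      rw [Function.update_of_ne hb]; simp [ee])]
    simpa using hene

lemma hasDerivAt_sumexp {ι : Type*} [Fintype ι] (D E : ι → ℝ) (t : ℝ) :
    HasDerivAt (fun t : ℝ => ∑ σ, D σ * Real.exp (E σ * t))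
      (∑ σ, (D σ * E σ) * Real.exp (E σ * t)) t := by
  refine HasDerivAt.fun_sum fun σ _ => ?_
  have h0 : HasDerivAt (fun y : ℝ => E σ * y) (E σ) t := by
    simpa using (hasDerivAt_id t).const_mul (E σ)
  have h := h0.exp.const_mul (D σ)
  convert h using 1
  rfl
  ring

lemma deriv_deriv_sumexp {ι : Type*} [Fintype ι] (D E : ι → ℝ) :
    deriv (deriv fun t : ℝ => ∑ σ, D σ * Real.exp (E σ * t)) 0
      = ∑ σ, D σ * E σ ^ 2 := by
  have h1 : (deriv fun t : ℝ => ∑ σ, D σ * Real.exp (E σ * t))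
      = fun t : ℝ => ∑ σ, (D σ * E σ) * Real.exp (E σ * t) := by
    funext t
    exact (hasDerivAt_sumexp D E t).deriv
  rw [h1, (hasDerivAt_sumexp (fun σ => D σ * E σ) E 0).deriv]
  refine Finset.sum_congr rfl fun σ _ => ?_
  rw [mul_zero, Real.exp_zero]
  ring

lemma convT (D E : ℝ) (hD : 0 ≤ D) :
    ConvexOn ℝ Set.univ fun t : ℝ => D * Real.exp (E * t) := by
  refine ⟨convex_univ, fun t1 _ t2 _ a b ha hb hab => ?_⟩
  simp only [smul_eq_mul]
  have h := convexOn_exp.2 (Set.mem_univ (E * t1)) (Set.mem_univ (E * t2)) ha hb hab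
  simp only [smul_eq_mul] at h
  calc D * Real.exp (E * (a * t1 + b * t2))
      = D * Real.exp (a * (E * t1) + b * (E * t2)) := by ring_nf
    _ ≤ D * (a * Real.exp (E * t1) + b * Real.exp (E * t2)) :=
        mul_le_mul_of_nonneg_left h hD
    _ = a * (D * Real.exp (E * t1)) + b * (D * Real.exp (E * t2)) := by ring

lemma strictT (D E : ℝ) (hD : 0 < D) (hE : E ≠ 0) :
    StrictConvexOn ℝ Set.univ fun t : ℝ => D * Real.exp (E * t) := by
  refine ⟨convex_univ, fun t1 _ t2 _ hne a b ha hb hab => ?_⟩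
  simp only [smul_eq_mul]
  have h := strictConvexOn_exp.2 (Set.mem_univ (E * t1)) (Set.mem_univ (E * t2))
    (fun e => hne (mul_left_cancel₀ hE e)) ha hb hab
  simp only [smul_eq_mul] at h
  calc D * Real.exp (E * (a * t1 + b * t2))
      = D * Real.exp (a * (E * t1) + b * (E * t2)) := by ring_nf
    _ < D * (a * Real.exp (E * t1) + b * Real.exp (E * t2)) :=
        (mul_lt_mul_iff_right₀ hD).mpr h
    _ = a * (D * Real.exp (E * t1)) + b * (D * Real.exp (E * t2)) := by ring

lemma convSum {ι : Type*} [DecidableEq ι] (D E : ι → ℝ) (hD : ∀ σ, 0 ≤ D σ)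
    (s : Finset ι) :
    ConvexOn ℝ Set.univ fun t : ℝ => ∑ σ ∈ s, D σ * Real.exp (E σ * t) := by
  induction s using Finset.induction_on with
  | empty => simpa using convexOn_const (0:ℝ) convex_univ
  | insert _ _ hns ih =>
    rename_i a s
    have := (convT (D a) (E a) (hD a)).add ih
    convert this using 1
    rfl
    funext t
    simp [Finset.sum_insert hns]

lemma strictSum {ι : Type*} [Fintype ι] [DecidableEq ι] (D E : ι → ℝ)
    (hD : ∀ σ, 0 ≤ D σ) (σ0 : ι) (h0 : 0 < D σ0) (hE : E σ0 ≠ 0) :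
    StrictConvexOn ℝ Set.univ fun t : ℝ => ∑ σ, D σ * Real.exp (E σ * t) := by
  have hrw : (fun t : ℝ => ∑ σ, D σ * Real.exp (E σ * t))
      = fun t : ℝ => D σ0 * Real.exp (E σ0 * t)
        + ∑ σ ∈ Finset.univ.erase σ0, D σ * Real.exp (E σ * t) := by
    funext t
    exact (Finset.add_sum_erase _ (fun σ => D σ * Real.exp (E σ * t))
      (Finset.mem_univ σ0)).symm
  rw [hrw]
  exact (strictT _ _ h0 hE).add_convexOn (convSum D E hD _)

theorem stmt4 {n : ℕ} (hn : 2 ≤ n) (A : Matrix (Fin n) (Fin n) ℝ)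
    (p : Fin n → ℝ) (γ : ℝ)
    (hA : ∀ i j, 0 ≤ A i j) (hp : ∀ i, 0 ≤ p i)
    (hdiag : ∀ i, 0 < A i i)
    (hirr : Irred A ∨ Irred (aug A p)) :
    (∀ x : Fin n → ℝ, (∑ i, x i) = γ → ∀ h : Fin n → ℝ, (∑ i, h i) = 0 →
      h ≠ 0 → 0 < deriv (deriv fun t : ℝ => g A p (x + t • h)) 0) ∧
    StrictConvexOn ℝ {x : Fin n → ℝ | (∑ i, x i) = γ} (g A p) := by
  constructor
  · intro x hx h hsum hne
    have hfun : (fun t : ℝ => g A p (x + t • h))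
        = fun t : ℝ => ∑ σ : Fin n → Option (Fin n),
            (∏ i, cc A p x i (σ i)) * Real.exp ((∑ i, ee h i (σ i)) * t) :=
      funext (expand A p x h)
    rw [hfun, deriv_deriv_sumexp]
    obtain ⟨σ0, hpos, hene⟩ := witness hn x hp hdiag hirr hsum hne
    refine Finset.sum_pos' (fun σ _ => ?_) ⟨σ0, Finset.mem_univ σ0, ?_⟩
    · have h1 : 0 ≤ ∏ i, cc A p x i (σ i) :=
        Finset.prod_nonneg fun i _ => cc_nonneg hA hp x i (σ i)
      positivity
    · have := hene
      positivity
  · refine ⟨?_, ?_⟩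
    · intro x hx y hy a b ha hb hab
      simp only [Set.mem_setOf_eq] at hx hy ⊢
      simp only [Pi.add_apply, Pi.smul_apply, smul_eq_mul]
      rw [Finset.sum_add_distrib, ← Finset.mul_sum, ← Finset.mul_sum, hx, hy]
      linear_combination γ * hab
    · intro x hx y hy hxy a b ha hb hab
      simp only [Set.mem_setOf_eq] at hx hy
      have hsum : (∑ i, (y - x) i) = 0 := by
        simp only [Pi.sub_apply]
        rw [Finset.sum_sub_distrib, hx, hy, sub_self]
      have hne : y - x ≠ 0 := sub_ne_zero.mpr (Ne.symm hxy)
      obtain ⟨σ0, hpos, hene⟩ := witness hn x hp hdiag hirr hsum hne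
      have hDnn : ∀ σ : Fin n → Option (Fin n), 0 ≤ ∏ i, cc A p x i (σ i) :=
        fun σ => Finset.prod_nonneg fun i _ => cc_nonneg hA hp x i (σ i)
      have sc := strictSum (fun σ : Fin n → Option (Fin n) => ∏ i, cc A p x i (σ i))
        (fun σ => ∑ i, ee (y - x) i (σ i)) hDnn σ0 hpos hene
      have key := sc.2 (Set.mem_univ (0:ℝ)) (Set.mem_univ (1:ℝ))
        (by norm_num) ha hb hab
      beta_reduce at key
      rw [← expand A p x (y - x), ← expand A p x (y - x),
        ← expand A p x (y - x)] at key
      have e0 : x + (0:ℝ) • (y - x) = x := by simp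
      have e1 : x + (1:ℝ) • (y - x) = y := by simp
      have eb : x + (a • (0:ℝ) + b • (1:ℝ)) • (y - x) = a • x + b • y := by
        funext i
        simp only [Pi.add_apply, Pi.smul_apply, Pi.sub_apply, smul_eq_mul]
        have : a = 1 - b := by linarith
        subst this
        ring
      rw [eb, e0, e1] at key
      exact key
end

section
/- Let n ≥ 2, A ∈ ℝ₊^{n×n} with positive diagonal, p ∈ ℝ₊ⁿ, γ ∈ ℝ, and suppose A or the matrix [[A, p],[𝟙ᵀ, 1]] is irreducible. Let μ be the smallest nonzero entry among the entries of A and p, and c = 1/(n−1). Then for g(x) = ∏ᵢ e^{−xᵢ}(pᵢ + Σⱼ A_{i,j} e^{xⱼ}) and every x with Σᵢ xᵢ = γ one has g(x) ≥ μⁿ · e^{−|γ| c} · e^{c ‖x‖_∞}. -/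
def pval {n : ℕ} (x : Fin n → ℝ) (v : Fin (n+1)) : ℝ :=
  if h : (v : ℕ) < n then x ⟨v, h⟩ else 0

section facts
variable {n : ℕ} (A : Matrix (Fin n) (Fin n) ℝ) (p : Fin n → ℝ) (x : Fin n → ℝ) (μ : ℝ)

noncomputable def fac (j : Fin n) : ℝ :=
  Real.exp (-(x j)) * (p j + ∑ t, A j t * Real.exp (x t))

lemma g_eq : g A p x = ∏ j, fac A p x j := rfl

lemma factor_bound (hA : ∀ i j, 0 ≤ A i j) (hp : ∀ i, 0 ≤ p i)
    (hAμ : ∀ i j, 0 < A i j → μ ≤ A i j) (hpμ : ∀ i, 0 < p i → μ ≤ p i)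
    (j : Fin n) (v : Fin (n+1))
    (hpos : 0 < (if hv : (v : ℕ) < n then A j ⟨v, hv⟩ else p j)) :
    μ * Real.exp (pval x v - x j) ≤ fac A p x j := by
  unfold fac pval
  split_ifs at hpos ⊢ with hv
  · -- A-entry case
    have h1 : μ * Real.exp (x ⟨v, hv⟩) ≤ A j ⟨v, hv⟩ * Real.exp (x ⟨v, hv⟩) :=
      mul_le_mul_of_nonneg_right (hAμ _ _ hpos) (Real.exp_pos _).le
    have h2 : A j ⟨v, hv⟩ * Real.exp (x ⟨v, hv⟩) ≤ ∑ t, A j t * Real.exp (x t) :=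
      Finset.single_le_sum (f := fun t => A j t * Real.exp (x t))
        (fun t _ => mul_nonneg (hA _ _) (Real.exp_pos _).le) (Finset.mem_univ _)
    have h3 : μ * Real.exp (x ⟨v, hv⟩) ≤ p j + ∑ t, A j t * Real.exp (x t) := by
      have := hp j; linarith
    calc μ * Real.exp (x ⟨v, hv⟩ - x j)
        = Real.exp (-(x j)) * (μ * Real.exp (x ⟨v, hv⟩)) := by
          rw [Real.exp_sub, Real.exp_neg]; ring
      _ ≤ _ := mul_le_mul_of_nonneg_left h3 (Real.exp_pos _).le
  · -- p-entry case
    have h3 : μ ≤ p j + ∑ t, A j t * Real.exp (x t) := by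
      have h2 : (0:ℝ) ≤ ∑ t, A j t * Real.exp (x t) :=
        Finset.sum_nonneg fun t _ => mul_nonneg (hA _ _) (Real.exp_pos _).le
      have := hpμ j hpos; linarith
    calc μ * Real.exp (0 - x j) = Real.exp (-(x j)) * μ := by
          rw [zero_sub, Real.exp_neg]; ring
      _ ≤ _ := mul_le_mul_of_nonneg_left h3 (Real.exp_pos _).le

lemma fac_ge (hA : ∀ i j, 0 ≤ A i j) (hp : ∀ i, 0 ≤ p i)
    (hAμ : ∀ i j, 0 < A i j → μ ≤ A i j) (hpμ : ∀ i, 0 < p i → μ ≤ p i)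
    (hdiag : ∀ i, 0 < A i i) (j : Fin n) : μ ≤ fac A p x j := by
  have := factor_bound A p x μ hA hp hAμ hpμ j j.castSucc (by
    have hv : ((j.castSucc : Fin (n+1)) : ℕ) < n := j.isLt
    rw [dif_pos hv]
    exact hdiag _)
  have hv : ((j.castSucc : Fin (n+1)) : ℕ) < n := j.isLt
  rw [pval, dif_pos hv] at this
  simpa using this

lemma prod_bound (hμ : 0 < μ) (hf : ∀ j, μ ≤ fac A p x j)
    (k : ℕ) (e : Fin k → Fin n) (he : Function.Injective e)
    (w : Fin k → ℝ) (hw : ∀ t, μ * Real.exp (w t) ≤ fac A p x (e t)) :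
    μ ^ n * Real.exp (∑ t, w t) ≤ g A p x := by
  classical
  rw [g_eq]
  have hkn : k ≤ n := by
    have := Fintype.card_le_of_injective e he
    simpa using this
  set S : Finset (Fin n) := Finset.univ.image e with hS
  have hcardS : S.card = k := by
    rw [hS, Finset.card_image_of_injective _ he]; simp
  have hsplit : (∏ j, fac A p x j) = (∏ j ∈ S, fac A p x j) * (∏ j ∈ Sᶜ, fac A p x j) :=
    (Finset.prod_mul_prod_compl S _).symm
  have h1 : μ ^ k * Real.exp (∑ t, w t) ≤ ∏ j ∈ S, fac A p x j := by
    rw [hS, Finset.prod_image (fun a _ b _ h => he h)]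
    calc μ ^ k * Real.exp (∑ t, w t) = ∏ t, μ * Real.exp (w t) := by
          rw [Finset.prod_mul_distrib, ← Real.exp_sum]
          simp
      _ ≤ _ := Finset.prod_le_prod
          (fun t _ => by positivity) (fun t _ => hw t)
  have h2 : μ ^ (n - k) ≤ ∏ j ∈ Sᶜ, fac A p x j := by
    have hcard : Sᶜ.card = n - k := by
      rw [Finset.card_compl, hcardS]; simp
    calc μ ^ (n - k) = ∏ _j ∈ Sᶜ, μ := by rw [Finset.prod_const, hcard]
      _ ≤ _ := Finset.prod_le_prod (fun _ _ => hμ.le) (fun j _ => hf j)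
  have hmain : (μ ^ k * Real.exp (∑ t, w t)) * μ ^ (n - k) ≤
      (∏ j ∈ S, fac A p x j) * (∏ j ∈ Sᶜ, fac A p x j) := by
    apply mul_le_mul h1 h2 (by positivity)
    exact Finset.prod_nonneg fun j _ => le_trans hμ.le (hf j)
  rw [hsplit]
  calc μ ^ n * Real.exp (∑ t, w t) = (μ ^ k * Real.exp (∑ t, w t)) * μ ^ (n - k) := by
        rw [mul_right_comm, ← pow_add μ k (n-k), Nat.add_sub_cancel' hkn]
    _ ≤ _ := hmain
end facts

lemma telescope {k : ℕ} (V : Fin (k+1) → ℝ) :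
    ∑ t : Fin k, (V t.succ - V t.castSucc) = V (Fin.last k) - V 0 := by
  induction k with
  | zero => simp
  | succ k ih =>
    rw [Fin.sum_univ_castSucc]
    have h := ih (V ∘ Fin.castSucc)
    simp only [Function.comp_apply, Fin.succ_castSucc] at h ⊢
    rw [h]
    simp [Fin.succ_last]

lemma path_bound {n : ℕ} (A : Matrix (Fin n) (Fin n) ℝ) (p : Fin n → ℝ)
    (x : Fin n → ℝ) (μ : ℝ)
    (hA : ∀ i j, 0 ≤ A i j) (hp : ∀ i, 0 ≤ p i)
    (hAμ : ∀ i j, 0 < A i j → μ ≤ A i j) (hpμ : ∀ i, 0 < p i → μ ≤ p i)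
    (hdiag : ∀ i, 0 < A i i) (hμ : 0 < μ)
    (k : ℕ) (i : Fin (k+1) → Fin (n+1)) (hinj : Function.Injective i)
    (hlast : ∀ t, i t = Fin.last n → t = Fin.last k)
    (hedge : ∀ t : Fin k, 0 < aug A p (i t.castSucc) (i t.succ)) :
    μ ^ n * Real.exp (pval x (i (Fin.last k)) - pval x (i 0)) ≤ g A p x := by
  classical
  -- rows are < n
  have hrow : ∀ t : Fin k, ((i t.castSucc : Fin (n+1)) : ℕ) < n := by
    intro t
    rcases Nat.lt_or_ge ((i t.castSucc : Fin (n+1)) : ℕ) n with h | h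
    · exact h
    · exfalso
      have : i t.castSucc = Fin.last n := by
        apply Fin.ext
        have := (i t.castSucc).isLt
        simp only [Fin.val_last]
        omega
      have ht := hlast _ this
      have : (t.castSucc : ℕ) = k := by rw [ht]; simp
      simp at this
      omega
  set e : Fin k → Fin n := fun t => ⟨(i t.castSucc : ℕ), hrow t⟩ with he_def
  have he : Function.Injective e := by
    intro a b h
    have h2 : (e a : ℕ) = (e b : ℕ) := congrArg Fin.val h
    have h3 : i a.castSucc = i b.castSucc := Fin.ext h2
    exact Fin.castSucc_injective _ (hinj h3)
  set V : Fin (k+1) → ℝ := fun t => pval x (i t) with hV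
  set w : Fin k → ℝ := fun t => V t.succ - V t.castSucc with hw_def
  have hw : ∀ t, μ * Real.exp (w t) ≤ fac A p x (e t) := by
    intro t
    have hedge' := hedge t
    have hx : x (e t) = pval x (i t.castSucc) := by
      rw [pval, dif_pos (hrow t)]
    have : w t = pval x (i t.succ) - x (e t) := by rw [hx]
    rw [this]
    apply factor_bound A p x μ hA hp hAμ hpμ (e t) (i t.succ)
    rw [aug, dif_pos (hrow t)] at hedge'
    convert hedge'
  have hf := fac_ge A p x μ hA hp hAμ hpμ hdiag
  have := prod_bound A p x μ hμ hf k e he w hw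
  rwa [hw_def, telescope V] at this

lemma pval_castSucc {n : ℕ} (x : Fin n → ℝ) (j : Fin n) : pval x j.castSucc = x j := by
  rw [pval, dif_pos (show ((j.castSucc : Fin (n+1)) : ℕ) < n from j.isLt)]
  apply congrArg x
  apply Fin.ext
  simp

lemma pval_last {n : ℕ} (x : Fin n → ℝ) : pval x (Fin.last n) = 0 := by
  rw [pval, dif_neg]
  simp

lemma path_bound_A {n : ℕ} (A : Matrix (Fin n) (Fin n) ℝ) (p : Fin n → ℝ)
    (x : Fin n → ℝ) (μ : ℝ)
    (hA : ∀ i j, 0 ≤ A i j) (hp : ∀ i, 0 ≤ p i)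
    (hAμ : ∀ i j, 0 < A i j → μ ≤ A i j) (hpμ : ∀ i, 0 < p i → μ ≤ p i)
    (hdiag : ∀ i, 0 < A i i) (hμ : 0 < μ)
    (hirr : Irred A) (r s : Fin n) (hrs : r ≠ s) :
    μ ^ n * Real.exp (x s - x r) ≤ g A p x := by
  obtain ⟨k, i, hinj, h0, hl, hedge⟩ := hirr r s hrs
  have key := path_bound A p x μ hA hp hAμ hpμ hdiag hμ k
    (fun t => (i t).castSucc)
    (fun a b h => hinj (Fin.castSucc_injective _ h))
    (by intro t h
        exfalso
        have h2 : (((i t).castSucc : Fin (n+1)) : ℕ) = n := by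
          have := congrArg Fin.val h; simpa using this
        have h3 := (i t).isLt
        simp only [Fin.coe_castSucc] at h2
        omega)
    (by intro t
        show 0 < aug A p ((i t.castSucc).castSucc) ((i t.succ).castSucc)
        have hi : (((i t.castSucc).castSucc : Fin (n+1)) : ℕ) < n := by
          simpa using (i t.castSucc).isLt
        have hj : (((i t.succ).castSucc : Fin (n+1)) : ℕ) < n := by
          simpa using (i t.succ).isLt
        rw [aug, dif_pos hi, dif_pos hj]
        have e1 : (⟨(((i t.castSucc).castSucc : Fin (n+1)) : ℕ), hi⟩ : Fin n) = i t.castSucc := by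
          apply Fin.ext; simp
        have e2 : (⟨(((i t.succ).castSucc : Fin (n+1)) : ℕ), hj⟩ : Fin n) = i t.succ := by
          apply Fin.ext; simp
        rw [e1, e2]
        exact hedge t)
  simp only [pval_castSucc, h0, hl] at key
  exact key

lemma path_bound_aug {n : ℕ} (A : Matrix (Fin n) (Fin n) ℝ) (p : Fin n → ℝ)
    (x : Fin n → ℝ) (μ : ℝ)
    (hA : ∀ i j, 0 ≤ A i j) (hp : ∀ i, 0 ≤ p i)
    (hAμ : ∀ i j, 0 < A i j → μ ≤ A i j) (hpμ : ∀ i, 0 < p i → μ ≤ p i)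
    (hdiag : ∀ i, 0 < A i i) (hμ : 0 < μ)
    (hirr : Irred (aug A p)) (r : Fin n) :
    μ ^ n * Real.exp (-(x r)) ≤ g A p x := by
  have hne : r.castSucc ≠ Fin.last n := by
    intro h
    have h1 : ((r.castSucc : Fin (n+1)) : ℕ) = n := by rw [h]; simp
    have h2 := r.isLt
    simp only [Fin.coe_castSucc] at h1
    omega
  obtain ⟨k, i, hinj, h0, hl, hedge⟩ := hirr r.castSucc (Fin.last n) hne
  have key := path_bound A p x μ hA hp hAμ hpμ hdiag hμ k i hinj
    (by intro t h
        apply hinj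
        rw [h, hl])
    hedge
  rw [h0, hl, pval_castSucc, pval_last] at key
  simpa using key

lemma erase_min {n : ℕ} (hn : 2 ≤ n) (x : Fin n → ℝ) (γ : ℝ) (hsum : (∑ i, x i) = γ)
    (j : Fin n) : ∃ m, m ≠ j ∧ ((n:ℝ) - 1) * x m ≤ γ - x j := by
  classical
  set s := Finset.univ.erase j with hs
  have hcard : s.card = n - 1 := by
    rw [hs, Finset.card_erase_of_mem (Finset.mem_univ _)]
    simp
  have hne : s.Nonempty := by
    rw [← Finset.card_pos, hcard]; omega
  obtain ⟨m, hm, hmin⟩ := Finset.exists_min_image s x hne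
  refine ⟨m, (Finset.mem_erase.mp hm).1, ?_⟩
  have h1 : s.card • x m ≤ ∑ i ∈ s, x i :=
    Finset.card_nsmul_le_sum s x (x m) (fun i hi => hmin i hi)
  have h2 : ∑ i ∈ s, x i = γ - x j := by
    have := Finset.sum_erase_add Finset.univ x (Finset.mem_univ j)
    rw [hs]; rw [hsum] at this; linarith
  rw [h2, nsmul_eq_mul, hcard] at h1
  have hcast : ((n - 1 : ℕ) : ℝ) = (n : ℝ) - 1 := by
    rw [Nat.cast_sub (by omega)]; simp
  rwa [hcast] at h1

lemma erase_max {n : ℕ} (hn : 2 ≤ n) (x : Fin n → ℝ) (γ : ℝ) (hsum : (∑ i, x i) = γ)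
    (j : Fin n) : ∃ m, m ≠ j ∧ γ - x j ≤ ((n:ℝ) - 1) * x m := by
  classical
  set s := Finset.univ.erase j with hs
  have hcard : s.card = n - 1 := by
    rw [hs, Finset.card_erase_of_mem (Finset.mem_univ _)]
    simp
  have hne : s.Nonempty := by
    rw [← Finset.card_pos, hcard]; omega
  obtain ⟨m, hm, hmax⟩ := Finset.exists_max_image s x hne
  refine ⟨m, (Finset.mem_erase.mp hm).1, ?_⟩
  have h1 : ∑ i ∈ s, x i ≤ s.card • x m :=
    Finset.sum_le_card_nsmul s x (x m) (fun i hi => hmax i hi)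
  have h2 : ∑ i ∈ s, x i = γ - x j := by
    have := Finset.sum_erase_add Finset.univ x (Finset.mem_univ j)
    rw [hs]; rw [hsum] at this; linarith
  rw [h2, nsmul_eq_mul, hcard] at h1
  have hcast : ((n - 1 : ℕ) : ℝ) = (n : ℝ) - 1 := by
    rw [Nat.cast_sub (by omega)]; simp
  rwa [hcast] at h1

theorem stmt5 {n : ℕ} (hn : 2 ≤ n) (A : Matrix (Fin n) (Fin n) ℝ)
    (p : Fin n → ℝ) (γ μ : ℝ)
    (hA : ∀ i j, 0 ≤ A i j) (hp : ∀ i, 0 ≤ p i)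
    (hdiag : ∀ i, 0 < A i i)
    (hirr : Irred A ∨ Irred (aug A p))
    (hμ : IsLeast {y : ℝ | ((∃ i j, A i j = y) ∨ (∃ i, p i = y)) ∧ y ≠ 0} μ) :
    ∀ x : Fin n → ℝ, (∑ i, x i) = γ →
      μ ^ n * Real.exp (-(|γ| * ((n : ℝ) - 1)⁻¹)) * Real.exp (((n : ℝ) - 1)⁻¹ * ‖x‖) ≤
        g A p x := by
  intro x hsum
  -- facts about μ
  have hμ0 : 0 ≤ μ := by
    obtain ⟨⟨h, hne⟩, _⟩ := hμ
    rcases h with ⟨i, j, hij⟩ | ⟨i, hi⟩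
    · rw [← hij]; exact hA i j
    · rw [← hi]; exact hp i
  have hμpos : 0 < μ := lt_of_le_of_ne hμ0 (Ne.symm hμ.1.2)
  have hAμ : ∀ i j, 0 < A i j → μ ≤ A i j := fun i j h =>
    hμ.2 ⟨Or.inl ⟨i, j, rfl⟩, ne_of_gt h⟩
  have hpμ : ∀ i, 0 < p i → μ ≤ p i := fun i h =>
    hμ.2 ⟨Or.inr ⟨i, rfl⟩, ne_of_gt h⟩
  -- constants
  set c : ℝ := ((n : ℝ) - 1)⁻¹ with hc_def
  set M : ℝ := ‖x‖ with hM_def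
  have hN1 : (1 : ℝ) ≤ (n : ℝ) - 1 := by
    have : (2 : ℝ) ≤ (n : ℝ) := by exact_mod_cast hn
    linarith
  have hNpos : (0 : ℝ) < (n : ℝ) - 1 := by linarith
  have hc : 0 < c := inv_pos.mpr hNpos
  have hc1 : c ≤ 1 := by
    rw [hc_def]
    rw [inv_le_one_iff₀]
    right; exact hN1
  have hNc : ((n : ℝ) - 1) * c = 1 := mul_inv_cancel₀ (ne_of_gt hNpos)
  have hM0 : 0 ≤ M := norm_nonneg x
  -- index attaining the norm
  have hfne : (Finset.univ : Finset (Fin n)).Nonempty := ⟨⟨0, by omega⟩, Finset.mem_univ _⟩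
  obtain ⟨k, _, hkmax⟩ := Finset.exists_max_image Finset.univ (fun i => |x i|) hfne
  have hMk : M = |x k| := by
    apply le_antisymm
    · rw [hM_def]
      apply pi_norm_le_iff_of_nonneg (abs_nonneg _) |>.mpr
      intro i
      rw [Real.norm_eq_abs]
      exact hkmax i (Finset.mem_univ _)
    · rw [hM_def]
      have := norm_le_pi_norm x k
      rwa [Real.norm_eq_abs] at this
  -- reduction
  have hgoal : ∀ E : ℝ, c * M - |γ| * c ≤ E → μ ^ n * Real.exp E ≤ g A p x →
      μ ^ n * Real.exp (-(|γ| * c)) * Real.exp (c * M) ≤ g A p x := by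
    intro E hE hg
    refine le_trans ?_ hg
    rw [mul_assoc, ← Real.exp_add]
    apply mul_le_mul_of_nonneg_left _ (pow_nonneg hμ0 n)
    exact Real.exp_le_exp.mpr (by linarith)
  have habs1 : γ ≤ |γ| := le_abs_self γ
  have habs2 : -|γ| ≤ γ := neg_abs_le γ
  have hcγ : c * γ ≤ c * |γ| := mul_le_mul_of_nonneg_left habs1 hc.le
  have hcγ2 : -(c * |γ|) ≤ c * γ := by
    have := mul_le_mul_of_nonneg_left habs2 hc.le
    linarith
  have hNcm : ∀ y : ℝ, c * (((n:ℝ)-1) * y) = y := by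
    intro y; rw [← mul_assoc, mul_comm c, hNc, one_mul]
  rcases hirr with hirrA | hirrAug
  · rcases le_or_gt 0 (x k) with hxk | hxk
    · -- M = x k ≥ 0
      have hMxk : M = x k := by rw [hMk, abs_of_nonneg hxk]
      obtain ⟨m, hmk, hm⟩ := erase_min hn x γ hsum k
      obtain ⟨s, hsm, hs⟩ := erase_max hn x γ hsum m
      refine hgoal (x s - x m) ?_
        (path_bound_A A p x μ hA hp hAμ hpμ hdiag hμpos hirrA m s (Ne.symm hsm))
      have h1 : x m ≤ c * (γ - M) := by
        have h := mul_le_mul_of_nonneg_left hm hc.le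
        rw [hNcm] at h
        rw [hMxk]; linarith
      have h2 : c * (γ - x m) ≤ x s := by
        have h := mul_le_mul_of_nonneg_left hs hc.le
        rwa [hNcm] at h
      nlinarith [mul_le_mul_of_nonneg_left h1 hc.le,
        mul_le_mul_of_nonneg_left hcγ hc.le,
        mul_nonneg (mul_nonneg hc.le hc.le) hM0,
        mul_nonneg (mul_nonneg (sub_nonneg.mpr hc1) hc.le) (abs_nonneg γ)]
    · -- M = -x k
      have hMxk : M = -(x k) := by rw [hMk, abs_of_neg hxk]
      obtain ⟨s, hsk, hs⟩ := erase_max hn x γ hsum k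
      refine hgoal (x s - x k) ?_
        (path_bound_A A p x μ hA hp hAμ hpμ hdiag hμpos hirrA k s (Ne.symm hsk))
      have h2 : c * (γ - x k) ≤ x s := by
        have h := mul_le_mul_of_nonneg_left hs hc.le
        rwa [hNcm] at h
      have hxkM : x k = -M := by rw [hMxk]; ring
      rw [hxkM] at h2 ⊢
      nlinarith [mul_nonneg hc.le hM0]
  · rcases le_or_gt 0 (x k) with hxk | hxk
    · -- M = x k ≥ 0
      have hMxk : M = x k := by rw [hMk, abs_of_nonneg hxk]
      obtain ⟨m, hmk, hm⟩ := erase_min hn x γ hsum k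
      refine hgoal (-(x m)) ?_
        (path_bound_aug A p x μ hA hp hAμ hpμ hdiag hμpos hirrAug m)
      have h1 : x m ≤ c * (γ - M) := by
        have h := mul_le_mul_of_nonneg_left hm hc.le
        rw [hNcm] at h
        rw [hMxk]; linarith
      nlinarith
    · -- M = -x k
      have hMxk : M = -(x k) := by rw [hMk, abs_of_neg hxk]
      refine hgoal (-(x k)) ?_
        (path_bound_aug A p x μ hA hp hAμ hpμ hdiag hμpos hirrAug k)
      rw [← hMxk]
      nlinarith [mul_nonneg (sub_nonneg.mpr hc1) hM0, mul_nonneg hc.le (abs_nonneg γ)]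
end

section
/- Let n ≥ 2, A ∈ ℝ₊^{n×n} with positive diagonal, p ∈ ℝ₊ⁿ, γ ∈ ℝ, and suppose A or [[A, p],[𝟙ᵀ, 1]] is irreducible. Then the function g(x) = ∏ᵢ e^{−xᵢ}(pᵢ + Σⱼ A_{i,j} e^{xⱼ}) restricted to V_γ = {x : Σᵢ xᵢ = γ} tends to infinity as ‖x‖_∞ → ∞ along V_γ, and g attains a unique minimum point on V_γ. -/
namespace Stmt6Aux
open Finset Real
local notation "⟪" x ", " y "⟫" => @inner ℝ _ _ x y

variable {n : ℕ} (A : Matrix (Fin n) (Fin n) ℝ) (p : Fin n → ℝ)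

/-- the i-th factor of g -/
noncomputable def fac (x : Fin n → ℝ) (i : Fin n) : ℝ :=
  Real.exp (-(x i)) * (p i + ∑ j, A i j * Real.exp (x j))

lemma g_eq (x : Fin n → ℝ) : g A p x = ∏ i, fac A p x i := rfl

/-- extension of x by 0 at index n -/
def Xext (x : Fin n → ℝ) (w : Fin (n+1)) : ℝ :=
  if h : (w : ℕ) < n then x ⟨w, h⟩ else 0

variable (hA : ∀ i j, 0 ≤ A i j) (hp : ∀ i, 0 ≤ p i) (hdiag : ∀ i, 0 < A i i)

section basic
include hA

lemma sum_nonneg' (x : Fin n → ℝ) (i : Fin n) : 0 ≤ ∑ j, A i j * Real.exp (x j) :=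
  Finset.sum_nonneg fun j _ => mul_nonneg (hA i j) (Real.exp_pos _).le

lemma term_le_sum (x : Fin n → ℝ) (i j : Fin n) :
    A i j * Real.exp (x j) ≤ ∑ j', A i j' * Real.exp (x j') :=
  Finset.single_le_sum (fun j' _ => mul_nonneg (hA i j') (Real.exp_pos _).le) (mem_univ j)

include hp

lemma diag_le_fac (x : Fin n → ℝ) (i : Fin n) : A i i ≤ fac A p x i := by
  have h1 : A i i * Real.exp (x i) ≤ p i + ∑ j, A i j * Real.exp (x j) := by
    have := term_le_sum A hA x i i
    linarith [hp i]
  have h2 : Real.exp (-(x i)) * (A i i * Real.exp (x i)) = A i i := by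
    rw [← mul_assoc, mul_comm (Real.exp _), mul_assoc, ← Real.exp_add]
    simp
  calc A i i = Real.exp (-(x i)) * (A i i * Real.exp (x i)) := h2.symm
    _ ≤ fac A p x i := by
        unfold fac
        exact mul_le_mul_of_nonneg_left h1 (Real.exp_pos _).le

include hdiag

lemma fac_pos (x : Fin n → ℝ) (i : Fin n) : 0 < fac A p x i :=
  lt_of_lt_of_le (hdiag i) (diag_le_fac A p hA hp x i)

lemma g_pos (x : Fin n → ℝ) : 0 < g A p x := by
  rw [g_eq]
  exact Finset.prod_pos fun i _ => fac_pos A p hA hp hdiag x i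

lemma prod_diag_le_g (x : Fin n → ℝ) : ∏ i, A i i ≤ g A p x := by
  rw [g_eq]
  exact Finset.prod_le_prod (fun i _ => (hdiag i).le) (fun i _ => diag_le_fac A p hA hp x i)

end basic

include hA hp in
/-- edge lower bound on a factor -/
lemma edge_le_fac (x : Fin n → ℝ) (u w : Fin (n+1)) (hu : (u : ℕ) < n) :
    aug A p u w * Real.exp (Xext x w - x ⟨u, hu⟩) ≤ fac A p x ⟨u, hu⟩ := by
  by_cases hw : (w : ℕ) < n
  · have : aug A p u w = A ⟨u, hu⟩ ⟨w, hw⟩ := by simp [aug, hu, hw]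
    rw [this, Xext, dif_pos hw]
    have : A ⟨u, hu⟩ ⟨w, hw⟩ * Real.exp (x ⟨w, hw⟩ - x ⟨u, hu⟩)
        = Real.exp (-(x ⟨u, hu⟩)) * (A ⟨u, hu⟩ ⟨w, hw⟩ * Real.exp (x ⟨w, hw⟩)) := by
      rw [show x ⟨w, hw⟩ - x ⟨u, hu⟩ = -(x ⟨u, hu⟩) + x ⟨w, hw⟩ by ring, Real.exp_add]
      ring
    rw [this]
    unfold fac
    refine mul_le_mul_of_nonneg_left ?_ (Real.exp_pos _).le
    have := term_le_sum A hA x ⟨u, hu⟩ ⟨w, hw⟩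
    linarith [hp ⟨u, hu⟩]
  · have : aug A p u w = p ⟨u, hu⟩ := by simp [aug, hu, hw]
    rw [this, Xext, dif_neg hw]
    have h2 : p ⟨u, hu⟩ * Real.exp (0 - x ⟨u, hu⟩)
        = Real.exp (-(x ⟨u, hu⟩)) * p ⟨u, hu⟩ := by
      rw [show (0:ℝ) - x ⟨u, hu⟩ = -(x ⟨u, hu⟩) by ring]; ring
    rw [h2]
    unfold fac
    refine mul_le_mul_of_nonneg_left ?_ (Real.exp_pos _).le
    linarith [sum_nonneg' A hA x ⟨u, hu⟩]

lemma telescope (k : ℕ) (F : Fin (k+1) → ℝ) :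
    ∑ t : Fin k, (F t.succ - F t.castSucc) = F (Fin.last k) - F 0 := by
  induction k with
  | zero => simp
  | succ k ih =>
    rw [Fin.sum_univ_castSucc]
    have h1 : ∀ t : Fin k, (F (t.castSucc).succ - F t.castSucc.castSucc)
        = ((F ∘ Fin.castSucc) t.succ - (F ∘ Fin.castSucc) t.castSucc) := by
      intro t; simp [-Fin.castSucc_succ, Fin.succ_castSucc]
    rw [Finset.sum_congr rfl (fun t _ => h1 t), ih (F ∘ Fin.castSucc)]
    rw [show (Fin.last k).succ = Fin.last (k+1) from Fin.succ_last k]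
    simp

include hA hp hdiag in
/-- product along an injective path bounds g from below -/
lemma path_bound (k : ℕ) (i : Fin (k+1) → Fin (n+1))
    (hinj : Function.Injective i) (hlt : ∀ t : Fin k, ((i t.castSucc : Fin (n+1)) : ℕ) < n)
    (hpos : ∀ t : Fin k, 0 < aug A p (i t.castSucc) (i t.succ)) :
    ∃ c > 0, ∀ x : Fin n → ℝ,
      c * Real.exp (Xext x (i (Fin.last k)) - Xext x (i 0)) ≤ g A p x := by
  set pr : Fin k → Fin n := fun t => ⟨(i t.castSucc : ℕ), hlt t⟩ with hpr
  have hprinj : Function.Injective pr := by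
    intro a b hab
    have hv := congrArg Fin.val hab
    have : i a.castSucc = i b.castSucc := Fin.ext hv
    exact Fin.castSucc_injective k (hinj this)
  set S : Finset (Fin n) := Finset.image pr Finset.univ with hS
  refine ⟨(∏ t : Fin k, aug A p (i t.castSucc) (i t.succ)) * ∏ v ∈ Sᶜ, A v v, ?_, ?_⟩
  · exact mul_pos (Finset.prod_pos fun t _ => hpos t)
      (Finset.prod_pos fun v _ => hdiag v)
  intro x
  have hsplit : g A p x = (∏ v ∈ S, fac A p x v) * ∏ v ∈ Sᶜ, fac A p x v := by
    rw [g_eq, Finset.prod_mul_prod_compl]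
  have himg : ∏ v ∈ S, fac A p x v = ∏ t : Fin k, fac A p x (pr t) := by
    rw [hS, Finset.prod_image (fun a _ b _ h => hprinj h)]
  have hXeq : ∀ t : Fin k, x (pr t) = Xext x (i t.castSucc) := by
    intro t; rw [Xext, dif_pos (hlt t)]
  have hfac : ∀ t : Fin k,
      aug A p (i t.castSucc) (i t.succ) * Real.exp (Xext x (i t.succ) - Xext x (i t.castSucc))
        ≤ fac A p x (pr t) := by
    intro t
    have h := edge_le_fac A p hA hp x (i t.castSucc) (i t.succ) (hlt t)
    rw [show (⟨(i t.castSucc : ℕ), hlt t⟩ : Fin n) = pr t from rfl] at h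
    rwa [hXeq t] at h
  have h1 : (∏ t : Fin k, aug A p (i t.castSucc) (i t.succ))
        * Real.exp (Xext x (i (Fin.last k)) - Xext x (i 0))
      ≤ ∏ t : Fin k, fac A p x (pr t) := by
    have heq : (∏ t : Fin k, aug A p (i t.castSucc) (i t.succ))
        * Real.exp (Xext x (i (Fin.last k)) - Xext x (i 0))
        = ∏ t : Fin k, (aug A p (i t.castSucc) (i t.succ)
            * Real.exp (Xext x (i t.succ) - Xext x (i t.castSucc))) := by
      rw [Finset.prod_mul_distrib, ← Real.exp_sum]
      congr 2
      exact (telescope k (fun t => Xext x (i t))).symm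
    rw [heq]
    exact Finset.prod_le_prod
      (fun t _ => (mul_pos (hpos t) (Real.exp_pos _)).le)
      (fun t _ => hfac t)
  have h2 : ∏ v ∈ Sᶜ, A v v ≤ ∏ v ∈ Sᶜ, fac A p x v :=
    Finset.prod_le_prod (fun v _ => (hdiag v).le)
      (fun v _ => diag_le_fac A p hA hp x v)
  rw [hsplit, himg]
  calc (∏ t : Fin k, aug A p (i t.castSucc) (i t.succ)) * (∏ v ∈ Sᶜ, A v v)
        * Real.exp (Xext x (i (Fin.last k)) - Xext x (i 0))
      = ((∏ t : Fin k, aug A p (i t.castSucc) (i t.succ))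
          * Real.exp (Xext x (i (Fin.last k)) - Xext x (i 0))) * ∏ v ∈ Sᶜ, A v v := by ring
    _ ≤ (∏ t : Fin k, fac A p x (pr t)) * ∏ v ∈ Sᶜ, fac A p x v := by
        refine mul_le_mul h1 h2 (Finset.prod_nonneg fun v _ => (hdiag v).le) ?_
        exact Finset.prod_nonneg fun t _ => (fac_pos A p hA hp hdiag x (pr t)).le

lemma norm_est {n : ℕ} (hn : 2 ≤ n) (γ : ℝ) (x : Fin n → ℝ) (hx : ∑ i, x i = γ)
    (r s : Fin n) (hr : ∀ j, x r ≤ x j) (hs : ∀ j, x j ≤ x s) :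
    ‖x‖/(n:ℝ) - 2*|γ| ≤ x s - x r ∧ ‖x‖/(n:ℝ) - 2*|γ| ≤ -(x r) := by
  set N : ℝ := (n:ℝ) with hNdef
  have hN : (2:ℝ) ≤ N := by rw [hNdef]; exact_mod_cast hn
  have hN0 : (0:ℝ) < N := by linarith
  have h1 : N * x r ≤ γ := by
    have := Finset.card_nsmul_le_sum Finset.univ x (x r) (fun i _ => hr i)
    rwa [Finset.card_univ, Fintype.card_fin, nsmul_eq_mul, hx] at this
  have h2 : γ ≤ N * x s := by
    have := Finset.sum_le_card_nsmul Finset.univ x (x s) (fun i _ => hs i)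
    rwa [Finset.card_univ, Fintype.card_fin, nsmul_eq_mul, hx] at this
  have h3 : x s + (N - 1) * x r ≤ γ := by
    have hsum : x s + ∑ j ∈ Finset.univ.erase s, x j = γ := by
      rw [Finset.add_sum_erase Finset.univ x (Finset.mem_univ s), hx]
    have hcard : ((Finset.univ.erase s).card : ℝ) = N - 1 := by
      rw [Finset.card_erase_of_mem (Finset.mem_univ s), Finset.card_univ, Fintype.card_fin]
      have : 1 ≤ n := by omega
      push_cast [Nat.cast_sub this]
      ring
    have := Finset.card_nsmul_le_sum (Finset.univ.erase s) x (x r) (fun i _ => hr i)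
    rw [nsmul_eq_mul, hcard] at this
    linarith
  have hrγ : x r ≤ γ/N := by rw [le_div_iff₀ hN0]; linarith
  have hsγ : γ/N ≤ x s := by rw [div_le_iff₀ hN0]; linarith
  have hGN : |γ|/N ≤ |γ| := div_le_self (abs_nonneg γ) (by linarith)
  have hgle : γ/N ≤ |γ|/N := by gcongr; exact le_abs_self γ
  have hgle2 : -(|γ|/N) ≤ γ/N := by
    rw [← neg_div]; gcongr; exact neg_abs_le γ
  have h4 : ‖x‖ ≤ x s - x r + |γ|/N := by
    have hnn : 0 ≤ x s - x r + |γ|/N := by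
      have := hr s; have h0 : 0 ≤ |γ|/N := by positivity
      linarith
    rw [pi_norm_le_iff_of_nonneg hnn]
    intro i
    rw [Real.norm_eq_abs, abs_le]
    constructor
    · have := hr i; linarith
    · have := hs i; linarith
  have hxN : ‖x‖/N ≤ ‖x‖ := div_le_self (norm_nonneg x) (by linarith)
  constructor
  · linarith
  · rw [sub_le_iff_le_add, div_le_iff₀ hN0]
    have hG2 : |γ| ≤ |γ| * N := le_mul_of_one_le_right (abs_nonneg γ) (by linarith)
    nlinarith [abs_nonneg γ, le_abs_self γ]

lemma aug_castSucc (a b : Fin n) : aug A p a.castSucc b.castSucc = A a b := by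
  simp [aug, a.isLt, b.isLt]

lemma Xext_castSucc (x : Fin n → ℝ) (a : Fin n) : Xext x a.castSucc = x a := by
  simp [Xext, a.isLt]

lemma Xext_last (x : Fin n → ℝ) : Xext x (Fin.last n) = 0 := by
  simp [Xext]

include hA hp hdiag in
lemma exists_c (hn : 2 ≤ n) (hirr : Irred A ∨ Irred (aug A p)) (γ : ℝ) :
    ∃ c > 0, ∀ x : Fin n → ℝ, (∑ i, x i) = γ →
      c * Real.exp (‖x‖/(n:ℝ) - 2*|γ|) ≤ g A p x := by
  have hne : Nonempty (Fin n) := ⟨⟨0, by omega⟩⟩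
  rcases hirr with hirrA | hirrB
  · have H : ∀ q : Fin n × Fin n, ∃ c, 0 < c ∧
        ∀ x : Fin n → ℝ, c * Real.exp (x q.2 - x q.1) ≤ g A p x := by
      rintro ⟨r, s⟩
      by_cases hrs : r = s
      · subst hrs
        refine ⟨∏ i, A i i, Finset.prod_pos fun i _ => hdiag i, fun x => ?_⟩
        simp only [sub_self, Real.exp_zero, mul_one]
        exact prod_diag_le_g A p hA hp hdiag x
      · obtain ⟨k, i, hinj, h0, hlast, hpos⟩ := hirrA r s hrs
        have hinj' : Function.Injective (fun t => (i t).castSucc : Fin (k+1) → Fin (n+1)) :=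
          fun a b hab => hinj (Fin.castSucc_injective n hab)
        have hlt : ∀ t : Fin k, (((i t.castSucc).castSucc : Fin (n+1)) : ℕ) < n :=
          fun t => (i t.castSucc).isLt
        have hpos' : ∀ t : Fin k,
            0 < aug A p ((i t.castSucc).castSucc) ((i t.succ).castSucc) := by
          intro t; rw [aug_castSucc]; exact hpos t
        obtain ⟨c, hc, hb⟩ := path_bound A p hA hp hdiag k (fun t => (i t).castSucc)
          hinj' hlt hpos'
        refine ⟨c, hc, fun x => ?_⟩
        have := hb x
        rwa [Xext_castSucc, Xext_castSucc, h0, hlast] at this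
    choose c hc hb using H
    refine ⟨Finset.univ.inf' Finset.univ_nonempty c, ?_, ?_⟩
    · rw [gt_iff_lt, Finset.lt_inf'_iff]; exact fun q _ => hc q
    intro x hx
    obtain ⟨r, hr⟩ := Finite.exists_min x
    obtain ⟨s, hs⟩ := Finite.exists_max x
    have hest := (norm_est hn γ x hx r s hr hs).1
    calc Finset.univ.inf' Finset.univ_nonempty c * Real.exp (‖x‖/(n:ℝ) - 2*|γ|)
        ≤ c (r, s) * Real.exp (x s - x r) := by
          exact mul_le_mul (Finset.inf'_le c (Finset.mem_univ _))
            (Real.exp_le_exp.mpr hest) (Real.exp_pos _).le (hc _).le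
      _ ≤ g A p x := hb (r, s) x
  · have H : ∀ r : Fin n, ∃ c, 0 < c ∧
        ∀ x : Fin n → ℝ, c * Real.exp (-(x r)) ≤ g A p x := by
      intro r
      have hrne : r.castSucc ≠ Fin.last n := (Fin.castSucc_lt_last r).ne
      obtain ⟨k, i, hinj, h0, hlast, hpos⟩ := hirrB r.castSucc (Fin.last n) hrne
      have hlt : ∀ t : Fin k, ((i t.castSucc : Fin (n+1)) : ℕ) < n := by
        intro t
        have h1 : i t.castSucc ≠ i (Fin.last k) :=
          hinj.ne (Fin.castSucc_lt_last t).ne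
        rw [hlast] at h1
        exact Fin.val_lt_last h1
      obtain ⟨c, hc, hb⟩ := path_bound A p hA hp hdiag k i hinj hlt hpos
      refine ⟨c, hc, fun x => ?_⟩
      have := hb x
      rwa [h0, hlast, Xext_castSucc, Xext_last, zero_sub] at this
    choose c hc hb using H
    refine ⟨Finset.univ.inf' Finset.univ_nonempty c, ?_, ?_⟩
    · rw [gt_iff_lt, Finset.lt_inf'_iff]; exact fun q _ => hc q
    intro x hx
    obtain ⟨r, hr⟩ := Finite.exists_min x
    obtain ⟨s, hs⟩ := Finite.exists_max x
    have hest := (norm_est hn γ x hx r s hr hs).2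
    calc Finset.univ.inf' Finset.univ_nonempty c * Real.exp (‖x‖/(n:ℝ) - 2*|γ|)
        ≤ c r * Real.exp (-(x r)) := by
          exact mul_le_mul (Finset.inf'_le c (Finset.mem_univ _))
            (Real.exp_le_exp.mpr hest) (Real.exp_pos _).le (hc _).le
      _ ≤ g A p x := hb r x

include hA hp hdiag in
lemma coercive (hn : 2 ≤ n) (hirr : Irred A ∨ Irred (aug A p)) (γ M : ℝ) :
    ∃ R : ℝ, ∀ x : Fin n → ℝ, (∑ i, x i) = γ → R ≤ ‖x‖ → M ≤ g A p x := by
  obtain ⟨c, hc, hb⟩ := exists_c A p hA hp hdiag hn hirr γ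
  refine ⟨(n:ℝ) * (Real.log ((|M|+1)/c) + 2*|γ|), fun x hx hR => ?_⟩
  have hN0 : (0:ℝ) < (n:ℝ) := by
    have : 0 < n := by omega
    exact_mod_cast this
  have hlog : Real.log ((|M|+1)/c) + 2*|γ| ≤ ‖x‖/(n:ℝ) := by
    rw [le_div_iff₀ hN0]
    linarith [hR]
  have h2 : Real.log ((|M|+1)/c) ≤ ‖x‖/(n:ℝ) - 2*|γ| := by linarith
  have hMc : 0 < (|M|+1)/c := div_pos (by positivity) hc
  calc M ≤ |M| + 1 := by have := le_abs_self M; linarith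
    _ = c * ((|M|+1)/c) := by field_simp
    _ = c * Real.exp (Real.log ((|M|+1)/c)) := by rw [Real.exp_log hMc]
    _ ≤ c * Real.exp (‖x‖/(n:ℝ) - 2*|γ|) :=
        mul_le_mul_of_nonneg_left (Real.exp_le_exp.mpr h2) hc.le
    _ ≤ g A p x := hb x hx

lemma g_cont : Continuous (g A p) := by
  unfold g
  apply continuous_finset_prod
  intro i _
  exact (Real.continuous_exp.comp (continuous_apply i).neg).mul
    (continuous_const.add (continuous_finset_sum _ fun j _ =>
      continuous_const.mul (Real.continuous_exp.comp (continuous_apply j))))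

include hA hp hdiag in
lemma exists_min (hn : 2 ≤ n) (hirr : Irred A ∨ Irred (aug A p)) (γ : ℝ) :
    ∃ x : Fin n → ℝ, (∑ i, x i) = γ ∧
      ∀ y : Fin n → ℝ, (∑ i, y i) = γ → g A p x ≤ g A p y := by
  have hN0 : (0:ℝ) < (n:ℝ) := by
    have : 0 < n := by omega
    exact_mod_cast this
  set x₀ : Fin n → ℝ := fun _ => γ / (n:ℝ) with hx₀def
  have hx₀ : ∑ i, x₀ i = γ := by
    rw [hx₀def]
    rw [Finset.sum_const, Finset.card_univ, Fintype.card_fin, nsmul_eq_mul]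
    field_simp
  obtain ⟨R, hR⟩ := coercive A p hA hp hdiag hn hirr γ (g A p x₀ + 1)
  set R' := max R ‖x₀‖ with hR'def
  set V : Set (Fin n → ℝ) := {x | ∑ i, x i = γ} with hVdef
  have hVclosed : IsClosed V :=
    isClosed_eq (continuous_finset_sum _ fun i _ => continuous_apply i) continuous_const
  set K := Metric.closedBall (0 : Fin n → ℝ) R' ∩ V with hKdef
  have hK : IsCompact K := (isCompact_closedBall 0 R').inter_right hVclosed
  have hx₀K : x₀ ∈ K := by
    constructor
    · simp only [Metric.mem_closedBall, dist_zero_right]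
      exact le_max_right R ‖x₀‖
    · exact hx₀
  obtain ⟨z, hzK, hzmin⟩ := hK.exists_isMinOn ⟨x₀, hx₀K⟩ (g_cont A p).continuousOn
  refine ⟨z, hzK.2, fun y hy => ?_⟩
  by_cases hyR : ‖y‖ ≤ R'
  · refine isMinOn_iff.mp hzmin y ⟨?_, hy⟩
    simpa only [Metric.mem_closedBall, dist_zero_right] using hyR
  · push_neg at hyR
    have h1 : g A p x₀ + 1 ≤ g A p y := hR y hy (le_trans (le_max_left _ _) hyR.le)
    have h2 : g A p z ≤ g A p x₀ := isMinOn_iff.mp hzmin x₀ hx₀K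
    linarith

lemma sqrt_prod {α : Type*} (s : Finset α) (f : α → ℝ) (hf : ∀ i ∈ s, 0 ≤ f i) :
    Real.sqrt (∏ i ∈ s, f i) = ∏ i ∈ s, Real.sqrt (f i) := by
  induction s using Finset.cons_induction with
  | empty => simp
  | cons a s ha ih =>
    rw [Finset.prod_cons, Finset.prod_cons,
      Real.sqrt_mul (hf a (Finset.mem_cons_self a s)),
      ih (fun i hi => hf i (Finset.mem_cons_of_mem hi))]

/-- auxiliary vectors for the Cauchy-Schwarz argument -/
noncomputable def vec (i : Fin n) (a : Fin n → ℝ) : EuclideanSpace ℝ (Fin (n+1)) :=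
  WithLp.toLp 2 (fun j : Fin (n+1) => if h : (j : ℕ) < n then Real.sqrt (A i ⟨j, h⟩) * Real.exp (a ⟨j, h⟩ / 2)
           else Real.sqrt (p i))

lemma vec_castSucc (i : Fin n) (a : Fin n → ℝ) (j : Fin n) :
    vec A p i a j.castSucc = Real.sqrt (A i j) * Real.exp (a j / 2) := by
  simp [vec, j.isLt]

lemma vec_last (i : Fin n) (a : Fin n → ℝ) :
    vec A p i a (Fin.last n) = Real.sqrt (p i) := by
  simp [vec]

include hA hp in
lemma inner_vec (i : Fin n) (a b : Fin n → ℝ) :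
    ⟪vec A p i a, vec A p i b⟫ = p i + ∑ j, A i j * Real.exp ((a j + b j)/2) := by
  rw [PiLp.inner_apply]
  simp only [RCLike.inner_apply, conj_trivial]
  rw [Fin.sum_univ_castSucc]
  simp only [vec_castSucc, vec_last]
  rw [Real.mul_self_sqrt (hp i)]
  rw [add_comm]
  congr 1
  refine Finset.sum_congr rfl fun j _ => ?_
  rw [mul_mul_mul_comm, Real.mul_self_sqrt (hA i j), ← Real.exp_add]
  congr 2
  ring

include hA hp hdiag in
lemma factor_cs (i : Fin n) (x y : Fin n → ℝ) :
    fac A p (fun t => (x t + y t)/2) i ≤ Real.sqrt (fac A p x i) * Real.sqrt (fac A p y i) ∧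
    (fac A p (fun t => (x t + y t)/2) i = Real.sqrt (fac A p x i) * Real.sqrt (fac A p y i) →
      (∀ j, 0 < A i j → y j - x j = y i - x i) ∧ (0 < p i → x i = y i)) := by
  set z : Fin n → ℝ := fun t => (x t + y t)/2 with hzdef
  set u := vec A p i x with hudef
  set v := vec A p i y with hvdef
  have huu : ⟪u, u⟫ = p i + ∑ j, A i j * Real.exp (x j) := by
    rw [hudef, inner_vec A p hA hp i x x]
    congr 1
    exact Finset.sum_congr rfl fun j _ => by rw [add_self_div_two]
  have hvv : ⟪v, v⟫ = p i + ∑ j, A i j * Real.exp (y j) := by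
    rw [hvdef, inner_vec A p hA hp i y y]
    congr 1
    exact Finset.sum_congr rfl fun j _ => by rw [add_self_div_two]
  have huv : ⟪u, v⟫ = p i + ∑ j, A i j * Real.exp (z j) :=
    inner_vec A p hA hp i x y
  have ppos : ∀ w : Fin n → ℝ, 0 < p i + ∑ j, A i j * Real.exp (w j) := by
    intro w
    have h1 := term_le_sum A hA w i i
    have h2 : 0 < A i i * Real.exp (w i) := mul_pos (hdiag i) (Real.exp_pos _)
    linarith [hp i]
  have hnu : ‖u‖ = Real.sqrt (p i + ∑ j, A i j * Real.exp (x j)) := by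
    rw [← huu, real_inner_self_eq_norm_mul_norm, Real.sqrt_mul_self (norm_nonneg u)]
  have hnv : ‖v‖ = Real.sqrt (p i + ∑ j, A i j * Real.exp (y j)) := by
    rw [← hvv, real_inner_self_eq_norm_mul_norm, Real.sqrt_mul_self (norm_nonneg v)]
  have hU : 0 < ‖u‖ := by rw [hnu]; exact Real.sqrt_pos.mpr (ppos x)
  have hV : 0 < ‖v‖ := by rw [hnv]; exact Real.sqrt_pos.mpr (ppos y)
  have hsx : Real.sqrt (fac A p x i) = Real.exp (-(x i)/2) * ‖u‖ := by
    rw [show fac A p x i = Real.exp (-(x i)) * (p i + ∑ j, A i j * Real.exp (x j)) from rfl,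
      Real.sqrt_mul (Real.exp_pos _).le, ← Real.exp_half, hnu]
  have hsy : Real.sqrt (fac A p y i) = Real.exp (-(y i)/2) * ‖v‖ := by
    rw [show fac A p y i = Real.exp (-(y i)) * (p i + ∑ j, A i j * Real.exp (y j)) from rfl,
      Real.sqrt_mul (Real.exp_pos _).le, ← Real.exp_half, hnv]
  have hzz : -(x i)/2 + -(y i)/2 = -(z i) := by rw [hzdef]; ring
  have hprod : Real.sqrt (fac A p x i) * Real.sqrt (fac A p y i)
      = Real.exp (-(z i)) * (‖u‖ * ‖v‖) := by
    rw [hsx, hsy, mul_mul_mul_comm, ← Real.exp_add, hzz]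
  have hfz : fac A p z i = Real.exp (-(z i)) * ⟪u, v⟫ := by rw [huv]; rfl
  constructor
  · rw [hfz, hprod]
    exact mul_le_mul_of_nonneg_left (real_inner_le_norm u v) (Real.exp_pos _).le
  · intro heq
    rw [hfz, hprod] at heq
    have hip : ⟪u, v⟫ = ‖u‖ * ‖v‖ :=
      mul_left_cancel₀ (Real.exp_ne_zero _) heq
    have hdep : ‖v‖ • u = ‖u‖ • v := inner_eq_norm_mul_iff_real.mp hip
    have hcoord : ∀ w : Fin (n+1), ‖v‖ * u w = ‖u‖ * v w := by
      intro w
      have := congrArg (fun q : EuclideanSpace ℝ (Fin (n+1)) => q w) hdep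
      simpa [smul_eq_mul] using this
    have hEq : ∀ j : Fin n, 0 < A i j →
        ‖v‖ * Real.exp (x j / 2) = ‖u‖ * Real.exp (y j / 2) := by
      intro j hAij
      have h := hcoord j.castSucc
      rw [hudef, hvdef, vec_castSucc, vec_castSucc] at h
      have hsA : (0:ℝ) < Real.sqrt (A i j) := Real.sqrt_pos.mpr hAij
      have h' : Real.sqrt (A i j) * (‖v‖ * Real.exp (x j / 2))
          = Real.sqrt (A i j) * (‖u‖ * Real.exp (y j / 2)) := by ring_nf; ring_nf at h; linarith
      exact mul_left_cancel₀ hsA.ne' h'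
    constructor
    · intro j hAij
      have h1 := hEq j hAij
      have h2 := hEq i (hdiag i)
      have h3 : (‖u‖ * ‖v‖) * (Real.exp (x j / 2) * Real.exp (y i / 2))
          = (‖u‖ * ‖v‖) * (Real.exp (y j / 2) * Real.exp (x i / 2)) := by
        linear_combination (‖u‖ * Real.exp (y i / 2)) * h1 - (‖u‖ * Real.exp (y j / 2)) * h2
      have h4 := mul_left_cancel₀ (mul_pos hU hV).ne' h3
      rw [← Real.exp_add, ← Real.exp_add] at h4
      have h5 := Real.exp_eq_exp.mp h4
      linarith
    · intro hpi
      have h := hcoord (Fin.last n)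
      rw [hudef, hvdef, vec_last, vec_last] at h
      have hsp : (0:ℝ) < Real.sqrt (p i) := Real.sqrt_pos.mpr hpi
      have hUV : ‖v‖ = ‖u‖ := by
        have h' : Real.sqrt (p i) * ‖v‖ = Real.sqrt (p i) * ‖u‖ := by linarith
        exact mul_left_cancel₀ hsp.ne' h'
      have h2 := hEq i (hdiag i)
      rw [hUV] at h2
      have h3 := mul_left_cancel₀ hU.ne' h2
      have h4 := Real.exp_eq_exp.mp h3
      linarith

include hA hp hdiag in
lemma min_unique (hn : 2 ≤ n) (hirr : Irred A ∨ Irred (aug A p)) (γ : ℝ)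
    (x y : Fin n → ℝ) (hx : ∑ i, x i = γ) (hy : ∑ i, y i = γ)
    (hxm : ∀ w : Fin n → ℝ, (∑ i, w i) = γ → g A p x ≤ g A p w)
    (hym : ∀ w : Fin n → ℝ, (∑ i, w i) = γ → g A p y ≤ g A p w) : x = y := by
  set z : Fin n → ℝ := fun t => (x t + y t)/2 with hzdef
  have hz : ∑ i, z i = γ := by
    rw [hzdef, ← Finset.sum_div, Finset.sum_add_distrib, hx, hy]
    ring
  have hgxy : g A p x = g A p y := le_antisymm (hxm y hy) (hym x hx)
  have hle : ∀ i ∈ Finset.univ, fac A p z i ≤ Real.sqrt (fac A p x i) * Real.sqrt (fac A p y i) :=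
    fun i _ => (factor_cs A p hA hp hdiag i x y).1
  have hgz : g A p z ≤ Real.sqrt (g A p x) * Real.sqrt (g A p y) := by
    rw [g_eq, g_eq, g_eq,
      sqrt_prod _ _ (fun i _ => (fac_pos A p hA hp hdiag x i).le),
      sqrt_prod _ _ (fun i _ => (fac_pos A p hA hp hdiag y i).le),
      ← Finset.prod_mul_distrib]
    exact Finset.prod_le_prod (fun i _ => (fac_pos A p hA hp hdiag z i).le) hle
  have hsqrt : Real.sqrt (g A p x) * Real.sqrt (g A p y) = g A p x := by
    rw [hgxy, Real.mul_self_sqrt (g_pos A p hA hp hdiag y).le]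
  have hzeq : g A p z = g A p x := le_antisymm (hsqrt ▸ hgz) (hxm z hz)
  have hprod_eq : ∏ i, fac A p z i
      = ∏ i, Real.sqrt (fac A p x i) * Real.sqrt (fac A p y i) := by
    rw [← g_eq, hzeq, ← hsqrt, g_eq, g_eq,
      sqrt_prod _ _ (fun i _ => (fac_pos A p hA hp hdiag x i).le),
      sqrt_prod _ _ (fun i _ => (fac_pos A p hA hp hdiag y i).le),
      ← Finset.prod_mul_distrib]
  have hfeq : ∀ i : Fin n, fac A p z i = Real.sqrt (fac A p x i) * Real.sqrt (fac A p y i) := by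
    by_contra hcon
    push_neg at hcon
    obtain ⟨i0, hi0⟩ := hcon
    have hlt := Finset.prod_lt_prod (fun i _ => fac_pos A p hA hp hdiag z i) hle
      ⟨i0, Finset.mem_univ i0, lt_of_le_of_ne (hle i0 (Finset.mem_univ i0)) hi0⟩
    rw [hprod_eq] at hlt
    exact lt_irrefl _ hlt
  have E1 : ∀ i j : Fin n, 0 < A i j → y j - x j = y i - x i :=
    fun i j h => ((factor_cs A p hA hp hdiag i x y).2 (hfeq i)).1 j h
  have E2 : ∀ i : Fin n, 0 < p i → x i = y i :=
    fun i h => ((factor_cs A p hA hp hdiag i x y).2 (hfeq i)).2 h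
  set d : Fin n → ℝ := fun i => y i - x i with hddef
  rcases hirr with hirrA | hirrB
  · have hconst : ∀ r s : Fin n, d s = d r := by
      intro r s
      by_cases hrs : r = s
      · rw [hrs]
      obtain ⟨k, i, hinj, h0, hlast, hpos⟩ := hirrA r s hrs
      have claim : ∀ t : Fin (k+1), d (i t) = d (i 0) := by
        intro t
        induction t using Fin.induction with
        | zero => rfl
        | succ t ih =>
          have := E1 (i t.castSucc) (i t.succ) (hpos t)
          rw [show d (i t.succ) = y (i t.succ) - x (i t.succ) from rfl, this]
          exact ih
      rw [← h0, ← hlast]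
      exact claim (Fin.last k)
    have hsum : ∑ i, d i = 0 := by
      rw [hddef, Finset.sum_sub_distrib, hx, hy, sub_self]
    have hd0 : ∀ i : Fin n, d i = 0 := by
      intro i
      have : ∑ j, d j = ∑ _j : Fin n, d i :=
        Finset.sum_congr rfl fun j _ => hconst i j
      rw [hsum, Finset.sum_const, Finset.card_univ, Fintype.card_fin, nsmul_eq_mul] at this
      have hn0 : (0:ℝ) < (n:ℝ) := by
        have : 0 < n := by omega
        exact_mod_cast this
      have := this.symm
      rcases mul_eq_zero.mp this with h | h
      · exact absurd h hn0.ne'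
      · exact h
    funext i
    have := hd0 i
    rw [hddef] at this
    simp only [] at this
    linarith [this]
  · have hd0 : ∀ r : Fin n, d r = 0 := by
      intro r
      have hrne : r.castSucc ≠ Fin.last n := (Fin.castSucc_lt_last r).ne
      obtain ⟨k, i, hinj, h0, hlast, hpos⟩ := hirrB r.castSucc (Fin.last n) hrne
      have hltc : ∀ t : Fin k, ((i t.castSucc : Fin (n+1)) : ℕ) < n := by
        intro t
        have h1 : i t.castSucc ≠ i (Fin.last k) :=
          hinj.ne (Fin.castSucc_lt_last t).ne
        rw [hlast] at h1
        exact Fin.val_lt_last h1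
      have claim : ∀ t : Fin (k+1), ∀ h : ((i t : Fin (n+1)) : ℕ) < n,
          d ⟨(i t : ℕ), h⟩ = d r := by
        intro t
        induction t using Fin.induction with
        | zero =>
          intro h
          have hval : ((i 0 : Fin (n+1)) : ℕ) = (r : ℕ) := by rw [h0]; rfl
          have : (⟨((i 0 : Fin (n+1)) : ℕ), h⟩ : Fin n) = r := Fin.ext hval
          rw [this]
        | succ t ih =>
          intro h
          have hc := hltc t
          have hedge := hpos t
          have haug : aug A p (i t.castSucc) (i t.succ)
              = A ⟨(i t.castSucc : ℕ), hc⟩ ⟨(i t.succ : ℕ), h⟩ := by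
            simp [aug, hc, h]
          rw [haug] at hedge
          have := E1 ⟨(i t.castSucc : ℕ), hc⟩ ⟨(i t.succ : ℕ), h⟩ hedge
          rw [show d ⟨(i t.succ : ℕ), h⟩ = y ⟨(i t.succ : ℕ), h⟩ - x ⟨(i t.succ : ℕ), h⟩ from rfl,
            this]
          exact ih hc
      have hk : k ≠ 0 := by
        rintro rfl
        exact hrne (h0.symm.trans hlast)
      set t₀ : Fin k := ⟨k-1, by omega⟩ with ht₀def
      have ht₀ : t₀.succ = Fin.last k := by
        apply Fin.ext
        simp [ht₀def, Fin.val_succ]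
        omega
      have hlt0 := hltc t₀
      have hedge := hpos t₀
      rw [ht₀, hlast] at hedge
      have haug : aug A p (i t₀.castSucc) (Fin.last n) = p ⟨(i t₀.castSucc : ℕ), hlt0⟩ := by
        simp [aug, hlt0]
      rw [haug] at hedge
      have hxy := E2 ⟨(i t₀.castSucc : ℕ), hlt0⟩ hedge
      have hdrr := claim t₀.castSucc hlt0
      rw [show d ⟨(i t₀.castSucc : ℕ), hlt0⟩
          = y ⟨(i t₀.castSucc : ℕ), hlt0⟩ - x ⟨(i t₀.castSucc : ℕ), hlt0⟩ from rfl, ← hxy] at hdrr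
      rw [← hdrr]
      ring
    funext i
    have := hd0 i
    rw [hddef] at this
    simp only [] at this
    linarith [this]

end Stmt6Aux

theorem stmt6 {n : ℕ} (hn : 2 ≤ n) (A : Matrix (Fin n) (Fin n) ℝ)
    (p : Fin n → ℝ) (γ : ℝ)
    (hA : ∀ i j, 0 ≤ A i j) (hp : ∀ i, 0 ≤ p i)
    (hdiag : ∀ i, 0 < A i i)
    (hirr : Irred A ∨ Irred (aug A p)) :
    (∀ M : ℝ, ∃ R : ℝ, ∀ x : Fin n → ℝ, (∑ i, x i) = γ → R ≤ ‖x‖ →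
      M ≤ g A p x) ∧
    (∃! x : Fin n → ℝ, (∑ i, x i) = γ ∧
      ∀ y : Fin n → ℝ, (∑ i, y i) = γ → g A p x ≤ g A p y) := by
  constructor
  · intro M
    exact Stmt6Aux.coercive A p hA hp hdiag hn hirr γ M
  · obtain ⟨x, hx, hmin⟩ := Stmt6Aux.exists_min A p hA hp hdiag hn hirr γ
    refine ⟨x, ⟨hx, hmin⟩, ?_⟩
    rintro y ⟨hy, hymin⟩
    exact Stmt6Aux.min_unique A p hA hp hdiag hn hirr γ y x hy hx hymin hmin
end

section
/- Let L ∈ ℝ^{n×n} be essentially nonnegative and reducible, and p ∈ ℝ₊ⁿ. Then [[L, p],[𝟙ᵀ, 1]] is irreducible if and only if [[exp(Lt), p],[𝟙ᵀ, 1]] is irreducible for every t > 0. -/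
open Relation

section Comb

variable {α : Type*} {E : α → α → Prop}

lemma exists_nodup_chain : ∀ (N : ℕ) (l : List α) (a b : α), l.length ≤ N →
    List.Chain E a l → (a::l).getLast (List.cons_ne_nil a l) = b →
    ∃ l', List.Chain E a l' ∧ (a::l').getLast (List.cons_ne_nil a l') = b ∧
      (a::l').Nodup ∧ l' ⊆ l := by
  intro N
  induction N with
  | zero =>
    intro l a b hlen hc hlast
    have : l = [] := List.length_eq_zero_iff.mp (Nat.le_zero.mp hlen)
    subst this
    exact ⟨[], List.Chain.nil, hlast, List.nodup_singleton a, List.Subset.refl _⟩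
  | succ N ih =>
    intro l a b hlen hc hlast
    by_cases ha : a ∈ l
    · obtain ⟨l₁, l₂, rfl⟩ := List.append_of_mem ha
      have hsuf : List.Chain E a l₂ := by
        have h1 : List.Chain' E (a :: (l₁ ++ a :: l₂)) := hc
        have h2 : (a :: l₂) <:+ (a :: (l₁ ++ a :: l₂)) := by
          refine ⟨a :: l₁, by simp⟩
        exact (List.IsChain.suffix h1 h2 : List.Chain' E (a :: l₂))
      have hlast2 : (a :: l₂).getLast (List.cons_ne_nil a l₂) = b := by
        rw [← hlast]
        exact (List.getLast_append_of_right_ne_nil (a :: l₁) (a :: l₂) (List.cons_ne_nil a l₂)).symm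
      have hlen2 : l₂.length ≤ N := by
        simp only [List.length_append, List.length_cons] at hlen; omega
      obtain ⟨l', h1, h2, h3, h4⟩ := ih l₂ a b hlen2 hsuf hlast2
      exact ⟨l', h1, h2, h3, fun x hx => by simp [h4 hx]⟩
    · cases l with
      | nil =>
        exact ⟨[], List.Chain.nil, hlast, List.nodup_singleton a, List.Subset.refl _⟩
      | cons c l'' =>
        replace hc : E a c ∧ List.Chain E c l'' := List.isChain_cons_cons.mp hc
        have hlast' : (c :: l'').getLast (List.cons_ne_nil c l'') = b := by
          rw [← hlast, List.getLast_cons (List.cons_ne_nil c l'')]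
        have hlen' : l''.length ≤ N := by simp at hlen; omega
        obtain ⟨l₃, h1, h2, h3, h4⟩ := ih l'' c b hlen' hc.2 hlast'
        have hsub : c :: l₃ ⊆ c :: l'' := List.cons_subset_cons c h4
        refine ⟨c :: l₃, List.isChain_cons_cons.mpr ⟨hc.1, h1⟩, ?_, ?_, hsub⟩
        · rw [List.getLast_cons (List.cons_ne_nil c l₃)]; exact h2
        · exact List.nodup_cons.mpr ⟨fun hmem => ha (hsub hmem), h3⟩

lemma irred_iff {m : ℕ} (M : Matrix (Fin m) (Fin m) ℝ) :
    Irred M ↔ ∀ r s : Fin m, r ≠ s →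
      Relation.ReflTransGen (fun a b => a ≠ b ∧ 0 < M a b) r s := by
  constructor
  · intro h r s hrs
    obtain ⟨k, i, hinj, h0, hl, hpos⟩ := h r s hrs
    have key : ∀ j : Fin (k+1),
        Relation.ReflTransGen (fun a b => a ≠ b ∧ 0 < M a b) (i 0) (i j) := by
      intro j
      induction j using Fin.induction with
      | zero => exact .refl
      | succ j ihj =>
        exact ihj.tail ⟨hinj.ne (Fin.castSucc_lt_succ (i := j)).ne, hpos j⟩
    rw [← h0, ← hl]
    exact key (Fin.last k)
  · intro h r s hrs
    obtain ⟨l, hc, hlast⟩ := List.exists_isChain_cons_of_relationReflTransGen (h r s hrs)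
    obtain ⟨l', hc', hlast', hnd, -⟩ :=
      exists_nodup_chain l.length l r s le_rfl hc hlast
    have hlen : (r :: l').length = l'.length + 1 := by simp
    refine ⟨l'.length, fun j => (r :: l').get (Fin.cast hlen.symm j), ?_, ?_, ?_, ?_⟩
    · exact (List.nodup_iff_injective_get.mp hnd).comp (Fin.cast_injective _)
    · rfl
    · rw [← hlast', List.getLast_eq_getElem (List.cons_ne_nil r l')]
      congr 1
    · intro j
      have hch : List.Chain' (fun a b => a ≠ b ∧ 0 < M a b) (r :: l') := hc'
      have := List.isChain_iff_getElem.mp hch j (by simpa using j.isLt)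
      exact this.2

section Analytic

variable {m : ℕ}

lemma pow_apply_nonneg (N : Matrix (Fin m) (Fin m) ℝ) (hN : ∀ i j, 0 ≤ N i j) :
    ∀ (k : ℕ) (i j : Fin m), 0 ≤ (N ^ k) i j := by
  intro k
  induction k with
  | zero =>
    intro i j; rw [pow_zero]
    by_cases h : i = j <;> simp [Matrix.one_apply, h]
  | succ k ih =>
    intro i j
    rw [pow_succ, Matrix.mul_apply]
    exact Finset.sum_nonneg fun a _ => mul_nonneg (ih i a) (hN a j)

lemma matPow_pos_iff (N : Matrix (Fin m) (Fin m) ℝ) (hN : ∀ i j, 0 ≤ N i j) (i j : Fin m) :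
    (∃ k, 0 < (N ^ k) i j) ↔ ReflTransGen (fun a b => 0 < N a b) i j := by
  constructor
  · rintro ⟨k, hk⟩
    induction k generalizing i with
    | zero =>
      rw [pow_zero, Matrix.one_apply] at hk
      by_cases h : i = j
      · subst h; exact .refl
      · simp [h] at hk
    | succ k ih =>
      rw [pow_succ', Matrix.mul_apply] at hk
      have h0 : (Finset.univ : Finset (Fin m)).sum (fun _ => (0:ℝ)) <
          Finset.univ.sum (fun a => N i a * (N ^ k) a j) := by simpa using hk
      obtain ⟨a, -, ha⟩ := Finset.exists_lt_of_sum_lt h0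
      have h1 : 0 < N i a ∧ 0 < (N ^ k) a j := by
        rcases mul_pos_iff.mp ha with h | h
        · exact h
        · exact absurd h.1 (not_lt.mpr (hN i a))
      exact ReflTransGen.head h1.1 (ih a h1.2)
  · intro h
    induction h with
    | refl => exact ⟨0, by simp [Matrix.one_apply]⟩
    | @tail b c hab hbc ih =>
      obtain ⟨k, hk⟩ := ih
      refine ⟨k + 1, ?_⟩
      rw [pow_succ, Matrix.mul_apply]
      exact Finset.sum_pos' (fun a _ => mul_nonneg (pow_apply_nonneg N hN k i a) (hN a c))
        ⟨b, Finset.mem_univ b, mul_pos hk hbc⟩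

lemma exp_entry (M : Matrix (Fin m) (Fin m) ℝ) (i j : Fin m) :
    NormedSpace.exp M i j = ∑' k : ℕ, (k.factorial : ℝ)⁻¹ * (M ^ k) i j ∧
      Summable (fun k : ℕ => (k.factorial : ℝ)⁻¹ * (M ^ k) i j) := by
  letI : SeminormedRing (Matrix (Fin m) (Fin m) ℝ) := Matrix.linftyOpSemiNormedRing
  letI : NormedRing (Matrix (Fin m) (Fin m) ℝ) := Matrix.linftyOpNormedRing
  letI : NormedAlgebra ℝ (Matrix (Fin m) (Fin m) ℝ) := Matrix.linftyOpNormedAlgebra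
  have hsum : Summable (fun k : ℕ => (k.factorial : ℝ)⁻¹ • M ^ k) :=
    NormedSpace.expSeries_summable' (𝕂 := ℝ) M
  have hsum1 : Summable (fun k : ℕ => ((k.factorial : ℝ)⁻¹ • M ^ k) i) :=
    Pi.summable.mp hsum i
  have hsum2 : Summable (fun k : ℕ => ((k.factorial : ℝ)⁻¹ • M ^ k) i j) :=
    Pi.summable.mp hsum1 j
  constructor
  · rw [NormedSpace.exp_eq_tsum ℝ]
    show (∑' k : ℕ, (k.factorial : ℝ)⁻¹ • M ^ k) i j = _
    erw [tsum_apply hsum, tsum_apply hsum1]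
    rfl
  · exact hsum2

lemma exp_entry_pos_iff (M : Matrix (Fin m) (Fin m) ℝ)
    (hM : ∀ i j, i ≠ j → 0 ≤ M i j) (i j : Fin m) :
    0 < NormedSpace.exp M i j ↔
      ReflTransGen (fun a b => a ≠ b ∧ 0 < M a b) i j := by
  letI : SeminormedRing (Matrix (Fin m) (Fin m) ℝ) := Matrix.linftyOpSemiNormedRing
  letI : NormedRing (Matrix (Fin m) (Fin m) ℝ) := Matrix.linftyOpNormedRing
  letI : NormedAlgebra ℝ (Matrix (Fin m) (Fin m) ℝ) := Matrix.linftyOpNormedAlgebra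
  set c : ℝ := 1 + ∑ a, |M a a| with hc
  set N : Matrix (Fin m) (Fin m) ℝ := M + c • (1 : Matrix (Fin m) (Fin m) ℝ) with hNdef
  have hNd : ∀ a, 0 < N a a := by
    intro a
    have h1 : |M a a| ≤ ∑ b, |M b b| :=
      Finset.single_le_sum (fun b _ => abs_nonneg (M b b)) (Finset.mem_univ a)
    have h2 : -M a a ≤ |M a a| := neg_le_abs _
    simp only [hNdef, Matrix.add_apply, Matrix.smul_apply, Matrix.one_apply_eq, smul_eq_mul,
      mul_one, hc]
    linarith
  have hNoff : ∀ a b, a ≠ b → N a b = M a b := by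
    intro a b hab
    simp [hNdef, Matrix.one_apply_ne hab]
  have hN : ∀ a b, 0 ≤ N a b := by
    intro a b
    by_cases hab : a = b
    · subst hab; exact (hNd a).le
    · rw [hNoff a b hab]; exact hM a b hab
  have hMN : M = N + (-c) • (1 : Matrix (Fin m) (Fin m) ℝ) := by
    simp [hNdef]
  have hcomm : Commute N ((-c) • (1 : Matrix (Fin m) (Fin m) ℝ)) :=
    (Commute.one_right N).smul_right (-c)
  have hexp1 : NormedSpace.exp ((-c) • (1 : Matrix (Fin m) (Fin m) ℝ))
      = Real.exp (-c) • (1 : Matrix (Fin m) (Fin m) ℝ) := by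
    have h1 : (-c) • (1 : Matrix (Fin m) (Fin m) ℝ) = algebraMap ℝ _ (-c) :=
      (Algebra.algebraMap_eq_smul_one (-c)).symm
    erw [h1, ← NormedSpace.algebraMap_exp_comm, Algebra.algebraMap_eq_smul_one,
      Real.exp_eq_exp_ℝ]
  have hexp : NormedSpace.exp M = Real.exp (-c) • NormedSpace.exp N := by
    rw [hMN, Matrix.exp_add_of_commute N _ hcomm, hexp1]
    rw [Matrix.mul_smul, Matrix.mul_one]
  have hpos : 0 < Real.exp (-c) := Real.exp_pos _
  have hstep : ReflTransGen (fun a b => 0 < N a b) i j ↔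
      ReflTransGen (fun a b => a ≠ b ∧ 0 < M a b) i j := by
    constructor
    · intro h
      induction h with
      | refl => exact .refl
      | @tail b d hab hbd ih =>
        by_cases hb : b = d
        · subst hb; exact ih
        · exact ih.tail ⟨hb, by rw [← hNoff b d hb]; exact hbd⟩
    · intro h
      refine Relation.ReflTransGen.mono ?_ _ _ h
      intro a b hab
      rw [← hNoff a b hab.1] at hab
      exact hab.2
  rw [hexp]
  have hE := (exp_entry N i j).1
  have hS := (exp_entry N i j).2
  have htsum_nonneg : ∀ k : ℕ, 0 ≤ (k.factorial : ℝ)⁻¹ * (N ^ k) i j := fun k =>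
    mul_nonneg (by positivity) (pow_apply_nonneg N hN k i j)
  constructor
  · intro h
    have h2 : 0 < NormedSpace.exp N i j := by
      have : NormedSpace.exp M i j = Real.exp (-c) * NormedSpace.exp N i j := by
        rw [hexp]; rfl
      nlinarith [Real.exp_pos (-c), hexp ▸ h]
    rw [hE] at h2
    have h3 : ∃ k, 0 < (k.factorial : ℝ)⁻¹ * (N ^ k) i j := by
      by_contra hcon
      push_neg at hcon
      have : ∀ k : ℕ, (k.factorial : ℝ)⁻¹ * (N ^ k) i j = 0 := fun k =>
        le_antisymm (hcon k) (htsum_nonneg k)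
      rw [tsum_congr (fun k => this k)] at h2
      simp at h2
    obtain ⟨k, hk⟩ := h3
    have hk' : 0 < (N ^ k) i j := by
      rcases mul_pos_iff.mp hk with hh | hh
      · exact hh.2
      · exact absurd hh.2 (not_lt.mpr (pow_apply_nonneg N hN k i j))
    exact hstep.mp ((matPow_pos_iff N hN i j).mp ⟨k, hk'⟩)
  · intro h
    obtain ⟨k, hk⟩ := (matPow_pos_iff N hN i j).mpr (hstep.mpr h)
    have h2 : 0 < NormedSpace.exp N i j := by
      rw [hE]
      exact Summable.tsum_pos hS htsum_nonneg k (mul_pos (by positivity) hk)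
    show 0 < Real.exp (-c) * NormedSpace.exp N i j
    exact mul_pos hpos h2

end Analytic

theorem stmt11 {n : ℕ} (L : Matrix (Fin n) (Fin n) ℝ)
    (hL : ∀ i j, i ≠ j → 0 ≤ L i j) (hred : ¬ Irred L)
    (p : Fin n → ℝ) (hp : ∀ i, 0 ≤ p i) :
    Irred (aug L p) ↔
      ∀ t : ℝ, 0 < t → Irred (aug (NormedSpace.exp (t • L)) p) := by
  have haug_lt : ∀ (A : Matrix (Fin n) (Fin n) ℝ) (a b : Fin n),
      aug A p a.castSucc b.castSucc = A a b := by
    intro A a b; simp [aug]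
  have haug_right : ∀ (A : Matrix (Fin n) (Fin n) ℝ) (a : Fin n),
      aug A p a.castSucc (Fin.last n) = p a := by
    intro A a; simp [aug]
  have haug_last : ∀ (A : Matrix (Fin n) (Fin n) ℝ) (j : Fin (n+1)),
      aug A p (Fin.last n) j = 1 := by
    intro A j; simp [aug]
  have key : ∀ t : ℝ, 0 < t →
      (Irred (aug L p) ↔ Irred (aug (NormedSpace.exp (t • L)) p)) := by
    intro t ht
    set E := NormedSpace.exp (t • L) with hE
    have hoff : ∀ i j : Fin n, i ≠ j → 0 ≤ (t • L) i j := fun i j hij => by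
      simpa using mul_nonneg ht.le (hL i j hij)
    have hiff : ∀ a b : Fin n, 0 < E a b ↔
        ReflTransGen (fun a b => a ≠ b ∧ 0 < L a b) a b := by
      intro a b
      rw [hE, exp_entry_pos_iff (t • L) hoff a b]
      have hrel : (fun a b : Fin n => a ≠ b ∧ 0 < (t • L) a b)
          = (fun a b : Fin n => a ≠ b ∧ 0 < L a b) := by
        funext a b
        refine propext (and_congr_right fun _ => ?_)
        simp only [Matrix.smul_apply, smul_eq_mul]
        constructor
        · intro h; nlinarith
        · intro h; exact mul_pos ht h
      rw [hrel]
    have hlift : ∀ a b : Fin n,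
        ReflTransGen (fun a b => a ≠ b ∧ 0 < L a b) a b →
        ReflTransGen (fun a b : Fin (n+1) => a ≠ b ∧ 0 < aug L p a b)
          a.castSucc b.castSucc := by
      intro a b h
      refine Relation.ReflTransGen.lift Fin.castSucc ?_ _ _ h
      intro x y hxy
      exact ⟨fun hc => hxy.1 (Fin.castSucc_injective n hc), by
        rw [haug_lt]; exact hxy.2⟩
    have hclos : ∀ r s : Fin (n+1),
        ReflTransGen (fun a b : Fin (n+1) => a ≠ b ∧ 0 < aug L p a b) r s ↔
        ReflTransGen (fun a b : Fin (n+1) => a ≠ b ∧ 0 < aug E p a b) r s := by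
      intro r s
      constructor
      · refine Relation.ReflTransGen.mono ?_ r s
        intro x y hxy
        obtain ⟨hne, hpos⟩ := hxy
        refine ⟨hne, ?_⟩
        induction x using Fin.lastCases with
        | last => rw [haug_last]; norm_num
        | cast a =>
          induction y using Fin.lastCases with
          | last => rw [haug_right]; rw [haug_right] at hpos; exact hpos
          | cast b =>
            rw [haug_lt]
            rw [haug_lt] at hpos
            have hab : a ≠ b := fun hc => hne (by rw [hc])
            exact (hiff a b).mpr (Relation.ReflTransGen.single ⟨hab, hpos⟩)
      · intro h
        induction h with
        | refl => exact .refl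
        | @tail x y hxy hstep ih =>
          refine ih.trans ?_
          obtain ⟨hne, hpos⟩ := hstep
          induction x using Fin.lastCases with
          | last =>
            refine Relation.ReflTransGen.single ⟨hne, ?_⟩
            rw [haug_last]; norm_num
          | cast a =>
            induction y using Fin.lastCases with
            | last =>
              refine Relation.ReflTransGen.single ⟨hne, ?_⟩
              rw [haug_right]; rw [haug_right] at hpos; exact hpos
            | cast b =>
              rw [haug_lt] at hpos
              exact hlift a b ((hiff a b).mp hpos)
    rw [irred_iff, irred_iff]
    constructor
    · intro h r s hrs
      exact (hclos r s).mp (h r s hrs)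
    · intro h r s hrs
      exact (hclos r s).mpr (h r s hrs)
  constructor
  · intro h t ht
    exact (key t ht).mp h
  · intro h
    exact (key 1 one_pos).mpr (h 1 one_pos)
end Comb
end

section
/- Let n ≥ 2, γ ∈ ℝ, and suppose A ∈ ℝ^{n×n} together with p ∈ ℝ₊ⁿ admits (after conjugation by a permutation) the block structure A = [[X, 0],[Z, Y]] with p supported on the second block, i.e., à = [[A,p],[𝟙ᵀ,1]] has the form [[X,0,0],[Z,Y,p̄],[𝟙ᵀ,𝟙ᵀ,1]]. Write x = (x⁽¹⁾, x⁽²⁾) ∈ ℝ^{n₁} × ℝ^{n₂}. Then for every x > 0, E_{A,p}(x) = (∏_{i=1}^{n₁}(Xx⁽¹⁾)ᵢ/x⁽¹⁾ᵢ)·(∏_{i=1}^{n₂}(Zx⁽¹⁾ + Yx⁽²⁾ + p̄)ᵢ/x⁽²⁾ᵢ), and if moreover Zx⁽¹⁾ ≠ 0 or p̄ ≠ 0 at a point x > 0 with ∏ᵢ xᵢ = e^γ, then E_{A,p}(x) > E_{X,0}(x⁽¹⁾)·E_{Y,0}(x⁽²⁾). -/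
noncomputable def Efun {ι : Type*} [Fintype ι] (A : Matrix ι ι ℝ) (p : ι → ℝ)
    (η : ι → ℝ) : ℝ :=
  ∏ i, (η i)⁻¹ * (p i + ∑ j, A i j * η j)

theorem stmt13 {n₁ n₂ : ℕ} (hn₁ : 1 ≤ n₁) (hn₂ : 1 ≤ n₂) (hn : 2 ≤ n₁ + n₂)
    (γ : ℝ)
    (X : Matrix (Fin n₁) (Fin n₁) ℝ) (Y : Matrix (Fin n₂) (Fin n₂) ℝ)
    (Z : Matrix (Fin n₂) (Fin n₁) ℝ) (pb : Fin n₂ → ℝ)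
    (hX : ∀ i j, 0 ≤ X i j) (hY : ∀ i j, 0 ≤ Y i j) (hZ : ∀ i j, 0 ≤ Z i j)
    (hpb : ∀ i, 0 ≤ pb i) (hXd : ∀ i, 0 < X i i) (hYd : ∀ i, 0 < Y i i)
    -- the block matrix A = [[X,0],[Z,Y]] on indices Fin n₁ ⊕ Fin n₂ and the
    -- vector p = (0, pb):
    (A : Matrix (Fin n₁ ⊕ Fin n₂) (Fin n₁ ⊕ Fin n₂) ℝ)
    (hA : A = Matrix.fromBlocks X (0 : Matrix (Fin n₁) (Fin n₂) ℝ) Z Y)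
    (p : Fin n₁ ⊕ Fin n₂ → ℝ) (hp : p = Sum.elim (fun _ : Fin n₁ => (0:ℝ)) pb)
    (x : Fin n₁ → ℝ) (y : Fin n₂ → ℝ) (hx : ∀ i, 0 < x i) (hy : ∀ i, 0 < y i) :
    Efun A p (Sum.elim x y) =
      (∏ i, (x i)⁻¹ * (∑ j, X i j * x j)) *
        (∏ i, (y i)⁻¹ * ((∑ j, Z i j * x j) + (∑ j, Y i j * y j) + pb i)) ∧
    (((∃ i, (∑ j, Z i j * x j) ≠ 0) ∨ pb ≠ 0) →
      (∏ i, x i) * (∏ i, y i) = Real.exp γ →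
      Efun X (0 : Fin n₁ → ℝ) x * Efun Y (0 : Fin n₂ → ℝ) y < Efun A p (Sum.elim x y)) := by
  subst hA hp
  have heq : Efun (Matrix.fromBlocks X 0 Z Y)
      (Sum.elim (fun _ : Fin n₁ => (0:ℝ)) pb) (Sum.elim x y) =
      (∏ i, (x i)⁻¹ * (∑ j, X i j * x j)) *
        (∏ i, (y i)⁻¹ * ((∑ j, Z i j * x j) + (∑ j, Y i j * y j) + pb i)) := by
    unfold Efun
    rw [Fintype.prod_sum_type]
    congr 1
    · apply Finset.prod_congr rfl
      intro i _
      rw [Fintype.sum_sum_type]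
      simp [Matrix.fromBlocks]
    · apply Finset.prod_congr rfl
      intro i _
      rw [Fintype.sum_sum_type]
      simp only [Fintype.sum_sum_type, Matrix.fromBlocks, Matrix.of_apply,
        Sum.elim_inl, Sum.elim_inr]
      ring
  refine ⟨heq, ?_⟩
  intro hne _
  rw [heq]
  unfold Efun
  simp only [Pi.zero_apply, zero_add]
  have hXpos : ∀ i : Fin n₁, 0 < (x i)⁻¹ * (∑ j, X i j * x j) := by
    intro i
    apply mul_pos (inv_pos.mpr (hx i))
    exact Finset.sum_pos' (fun j _ => mul_nonneg (hX i j) (hx j).le)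
      ⟨i, Finset.mem_univ i, mul_pos (hXd i) (hx i)⟩
  have hYpos : ∀ i : Fin n₂, 0 < (y i)⁻¹ * (∑ j, Y i j * y j) := by
    intro i
    apply mul_pos (inv_pos.mpr (hy i))
    exact Finset.sum_pos' (fun j _ => mul_nonneg (hY i j) (hy j).le)
      ⟨i, Finset.mem_univ i, mul_pos (hYd i) (hy i)⟩
  have hZnn : ∀ i : Fin n₂, 0 ≤ ∑ j, Z i j * x j := fun i =>
    Finset.sum_nonneg fun j _ => mul_nonneg (hZ i j) (hx j).le
  apply mul_lt_mul_of_pos_left _ (Finset.prod_pos fun i _ => hXpos i)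
  have hstrict : ∃ i : Fin n₂, 0 < (∑ j, Z i j * x j) + pb i := by
    rcases hne with ⟨i, hi⟩ | hi
    · exact ⟨i, add_pos_of_pos_of_nonneg ((hZnn i).lt_of_ne (Ne.symm hi)) (hpb i)⟩
    · obtain ⟨i, hi⟩ := Function.ne_iff.mp hi
      exact ⟨i, add_pos_of_nonneg_of_pos (hZnn i)
        (lt_of_le_of_ne (hpb i) (Ne.symm hi))⟩
  obtain ⟨i₀, hi₀⟩ := hstrict
  apply Finset.prod_lt_prod (fun i _ => hYpos i)
  · intro i _
    apply mul_le_mul_of_nonneg_left _ (inv_pos.mpr (hy i)).le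
    nlinarith [hZnn i, hpb i]
  · refine ⟨i₀, Finset.mem_univ i₀, ?_⟩
    apply mul_lt_mul_of_pos_left _ (inv_pos.mpr (hy i₀))
    nlinarith
end

section
/- Let S₁ = (X₁, U₁, F₁) and S₂ = (X₂, U₂, F₂) be systems (Fᵢ : Xᵢ × Uᵢ ⇉ Xᵢ set-valued) with U₂ ⊆ U₁, and let Q ⊆ X₁ × X₂ and Q' ⊆ X₂ × X₃ be feedback refinement relations from S₁ to S₂ and from S₂ to S₃ respectively (with U₃ ⊆ U₂). Then the composition Q' ∘ Q is a feedback refinement relation from S₁ to S₃. -/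
/-- `US F x` is the set of inputs admissible at `x`. -/
def US {X U : Type*} (F : X → U → Set X) (x : X) : Set U := {u | F x u ≠ ∅}

/-- `Q` is a feedback refinement relation from `(X₁,U,F₁)` to `(X₂,U,F₂)`. -/
def FRR {X₁ X₂ U : Type*} (F₁ : X₁ → U → Set X₁) (F₂ : X₂ → U → Set X₂)
    (Q : X₁ → X₂ → Prop) : Prop :=
  (∀ x₁, ∃ x₂, Q x₁ x₂) ∧
  ∀ x₁ x₂, Q x₁ x₂ →
    (US F₂ x₂ ⊆ US F₁ x₁ ∧
      ∀ u ∈ US F₂ x₂, ∀ y₁ ∈ F₁ x₁ u, ∀ y₂, Q y₁ y₂ → y₂ ∈ F₂ x₂ u)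

theorem stmt17 {X₁ X₂ X₃ U : Type*}
    (F₁ : X₁ → U → Set X₁) (F₂ : X₂ → U → Set X₂) (F₃ : X₃ → U → Set X₃)
    (Q : X₁ → X₂ → Prop) (Q' : X₂ → X₃ → Prop)
    (hQ : FRR F₁ F₂ Q) (hQ' : FRR F₂ F₃ Q') :
    FRR F₁ F₃ (fun x₁ x₃ => ∃ x₂, Q x₁ x₂ ∧ Q' x₂ x₃) := by
  obtain ⟨hQs, hQc⟩ := hQ
  obtain ⟨hQ's, hQ'c⟩ := hQ'
  constructor
  · intro x₁
    obtain ⟨x₂, h2⟩ := hQs x₁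
    obtain ⟨x₃, h3⟩ := hQ's x₂
    exact ⟨x₃, x₂, h2, h3⟩
  · rintro x₁ x₃ ⟨x₂, h12, h23⟩
    obtain ⟨hU1, hF1⟩ := hQc x₁ x₂ h12
    obtain ⟨hU2, hF2⟩ := hQ'c x₂ x₃ h23
    refine ⟨fun u hu => hU1 (hU2 hu), ?_⟩
    rintro u hu y₁ hy₁ y₃ ⟨y₂, hy12, hy23⟩
    exact hF2 u hu y₂ (hF1 u (hU2 hu) y₁ hy₁ y₂ hy12) y₃ hy23
end

section
/- Let n ≥ 2, A ∈ ℝ₊^{n×n} with positive diagonal, p ∈ ℝ₊ⁿ. Suppose for indices r, s ∈ [1;n] (or s = n+1 with convention x_{n+1} = 0) there exist distinct indices i₁,…,i_m ∈ [1;n+1] with i₁ = r, i_m = s and Ã_{i_k, i_{k+1}} > 0 for all k < m, where à = [[A, p],[0, 1]]. Let μ be the smallest nonzero entry among the entries of A and p. Then for every x ∈ ℝⁿ with Σⱼ xⱼ = γ (extended by x_{n+1} = 0), g(x) = e^{−γ} ∏ᵢ (pᵢ + Σⱼ A_{i,j} e^{xⱼ}) satisfies g(x) ≥ μⁿ e^{x_s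 − x_r}. -/
/-- The augmented matrix [[A, p],[0, 1]]. -/
def aug0 {n : ℕ} (A : Matrix (Fin n) (Fin n) ℝ) (p : Fin n → ℝ) :
    Matrix (Fin (n+1)) (Fin (n+1)) ℝ := fun i j =>
  if hi : (i : ℕ) < n then
    (if hj : (j : ℕ) < n then A ⟨i, hi⟩ ⟨j, hj⟩ else p ⟨i, hi⟩)
  else (if (j : ℕ) < n then 0 else 1)

/-- `x` extended by `x_{n+1} = 0`. -/
def ext {n : ℕ} (x : Fin n → ℝ) : Fin (n+1) → ℝ := fun i =>
  if h : (i : ℕ) < n then x ⟨i, h⟩ else 0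

theorem stmt19 {n : ℕ} (hn : 2 ≤ n) (A : Matrix (Fin n) (Fin n) ℝ)
    (p : Fin n → ℝ) (γ μ : ℝ)
    (hA : ∀ i j, 0 ≤ A i j) (hp : ∀ i, 0 ≤ p i) (hdiag : ∀ i, 0 < A i i)
    (hμ : IsLeast {y : ℝ | ((∃ i j, A i j = y) ∨ (∃ i, p i = y)) ∧ y ≠ 0} μ)
    (r s : Fin (n+1)) (hr : (r : ℕ) < n)
    (hpath : ∃ (m : ℕ) (i : Fin (m+1) → Fin (n+1)),
      Function.Injective i ∧ i 0 = r ∧ i (Fin.last m) = s ∧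
      ∀ k : Fin m, 0 < aug0 A p (i k.castSucc) (i k.succ))
    (x : Fin n → ℝ) (hx : (∑ j, x j) = γ) :
    μ ^ n * Real.exp (ext x s - ext x r) ≤
      Real.exp (-γ) * ∏ i, (p i + ∑ j, A i j * Real.exp (x j)) := by
  classical
  obtain ⟨m, f, hinj, hf0, hflast, hpos⟩ := hpath
  have hμpos : 0 < μ := by
    obtain ⟨⟨h1, hne⟩, -⟩ := hμ
    rcases h1 with ⟨i, j, hij⟩ | ⟨i, hi⟩
    · exact lt_of_le_of_ne (hij ▸ hA i j) (Ne.symm hne)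
    · exact lt_of_le_of_ne (hi ▸ hp i) (Ne.symm hne)
  have hμle : ∀ y : ℝ, ((∃ i j, A i j = y) ∨ (∃ i, p i = y)) → y ≠ 0 → μ ≤ y :=
    fun y h hne => hμ.2 ⟨h, hne⟩
  have hext : ∀ j : Fin n, ext x j.castSucc = x j := by
    intro j
    simp [ext]
  -- rows on the path are < n
  have hrow : ∀ k : Fin m, (f k.castSucc : ℕ) < n := by
    intro k
    by_contra h
    have hk := hpos k
    rw [aug0] at hk
    rw [dif_neg h] at hk
    by_cases h2 : (f k.succ : ℕ) < n
    · simp [h2] at hk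
    · have h1n : (f k.castSucc : ℕ) = n := by
        have := (f k.castSucc).isLt; omega
      have h2n : (f k.succ : ℕ) = n := by
        have := (f k.succ).isLt; omega
      have heq : f k.castSucc = f k.succ := Fin.ext (h1n.trans h2n.symm)
      have := congrArg Fin.val (hinj heq)
      simp [Fin.val_succ] at this
  set σ : Fin n → Fin (n+1) := fun j =>
    if h : ∃ k : Fin m, f k.castSucc = j.castSucc then f (h.choose).succ
    else j.castSucc with hσ
  -- per-row lower bound
  have key : ∀ j : Fin n,
      μ * Real.exp (ext x (σ j)) ≤ p j + ∑ l, A j l * Real.exp (x l) := by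
    intro j
    have hsum_nonneg : (0:ℝ) ≤ ∑ l', A j l' * Real.exp (x l') :=
      Finset.sum_nonneg fun t _ => mul_nonneg (hA j t) (Real.exp_pos _).le
    have hsum_ge : ∀ l : Fin n,
        A j l * Real.exp (x l) ≤ p j + ∑ l', A j l' * Real.exp (x l') := by
      intro l
      have h1 : A j l * Real.exp (x l) ≤ ∑ l', A j l' * Real.exp (x l') :=
        Finset.single_le_sum
          (fun t _ => mul_nonneg (hA j t) (Real.exp_pos _).le) (Finset.mem_univ l)
      linarith [hp j]
    by_cases h : ∃ k : Fin m, f k.castSucc = j.castSucc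
    · have hσj : σ j = f (h.choose).succ := by simp only [hσ]; rw [dif_pos h]
      set k := h.choose with hkdef
      have hk : f k.castSucc = j.castSucc := h.choose_spec
      have hkpos := hpos k
      have hrowlt : ((f k.castSucc) : ℕ) < n := hrow k
      rw [aug0] at hkpos
      rw [dif_pos hrowlt] at hkpos
      have hjeq : (⟨(f k.castSucc : ℕ), hrowlt⟩ : Fin n) = j := by
        apply Fin.ext
        have : ((f k.castSucc : Fin (n+1)) : ℕ) = ((j.castSucc : Fin (n+1)) : ℕ) :=
          congrArg Fin.val hk
        simpa using this
      rw [hjeq] at hkpos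
      rw [hσj]
      by_cases h2 : (f k.succ : ℕ) < n
      · rw [dif_pos h2] at hkpos
        have hμA : μ ≤ A j ⟨f k.succ, h2⟩ :=
          hμle _ (Or.inl ⟨j, _, rfl⟩) (ne_of_gt hkpos)
        have hextv : ext x (f k.succ) = x ⟨f k.succ, h2⟩ := by simp [ext, h2]
        rw [hextv]
        calc μ * Real.exp (x ⟨f k.succ, h2⟩)
            ≤ A j ⟨f k.succ, h2⟩ * Real.exp (x ⟨f k.succ, h2⟩) :=
              mul_le_mul_of_nonneg_right hμA (Real.exp_pos _).le
          _ ≤ _ := hsum_ge _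
      · rw [dif_neg h2] at hkpos
        have hμp : μ ≤ p j := hμle _ (Or.inr ⟨j, rfl⟩) (ne_of_gt hkpos)
        have hextv : ext x (f k.succ) = 0 := by simp [ext, h2]
        rw [hextv, Real.exp_zero, mul_one]
        linarith
    · have hσj : σ j = j.castSucc := by simp only [hσ]; rw [dif_neg h]
      rw [hσj, hext j]
      have hμA : μ ≤ A j j := hμle _ (Or.inl ⟨j, j, rfl⟩) (ne_of_gt (hdiag j))
      calc μ * Real.exp (x j)
          ≤ A j j * Real.exp (x j) :=
            mul_le_mul_of_nonneg_right hμA (Real.exp_pos _).le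
        _ ≤ _ := hsum_ge j
  -- telescoping
  have htel : ∑ j : Fin n, (ext x (σ j) - x j) = ext x s - ext x r := by
    set e : Fin m → Fin n := fun k => ⟨(f k.castSucc : ℕ), hrow k⟩ with he
    have hecast : ∀ k, (e k).castSucc = f k.castSucc := fun k => Fin.ext rfl
    have heinj : Function.Injective e := by
      intro a b hab
      have h1 : f a.castSucc = f b.castSucc := by
        rw [← hecast, ← hecast, hab]
      exact Fin.castSucc_injective m (hinj h1)
    have hσe : ∀ k : Fin m, σ (e k) = f k.succ := by
      intro k
      have hex : ∃ k' : Fin m, f k'.castSucc = (e k).castSucc :=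
        ⟨k, (hecast k).symm⟩
      have hch : hex.choose = k :=
        Fin.castSucc_injective m (hinj (hex.choose_spec.trans (hecast k)))
      simp only [hσ]
      rw [dif_pos hex, hch]
    have hoff : ∀ j : Fin n, j ∉ Finset.image e Finset.univ →
        ext x (σ j) - x j = 0 := by
      intro j hj
      have h : ¬ ∃ k : Fin m, f k.castSucc = j.castSucc := by
        rintro ⟨k, hk⟩
        apply hj
        refine Finset.mem_image.mpr ⟨k, Finset.mem_univ _, ?_⟩
        apply Fin.ext
        have : ((f k.castSucc : Fin (n+1)) : ℕ) = ((j.castSucc) : ℕ) :=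
          congrArg Fin.val hk
        simpa [he] using this
      simp only [hσ]
      rw [dif_neg h, hext j, sub_self]
    set G : ℕ → ℝ := fun i => if h : i < m + 1 then ext x (f ⟨i, h⟩) else 0 with hG
    have hGt : ∀ k : Fin m,
        ext x (f k.succ) - ext x (f k.castSucc) = G ((k:ℕ)+1) - G (k:ℕ) := by
      intro k
      have h1 : (k:ℕ) + 1 < m + 1 := by omega
      have h2 : (k:ℕ) < m + 1 := by omega
      simp only [hG]
      rw [dif_pos h1, dif_pos h2]
      congr 1
    calc ∑ j : Fin n, (ext x (σ j) - x j)
        = ∑ j ∈ Finset.image e Finset.univ, (ext x (σ j) - x j) :=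
          (Finset.sum_subset (Finset.subset_univ _)
            (fun j _ hj => hoff j hj)).symm
      _ = ∑ k : Fin m, (ext x (σ (e k)) - x (e k)) :=
          Finset.sum_image (fun a _ b _ h => heinj h)
      _ = ∑ k : Fin m, (ext x (f k.succ) - ext x (f k.castSucc)) := by
          refine Finset.sum_congr rfl fun k _ => ?_
          rw [hσe k, ← hext (e k), hecast k]
      _ = ∑ k : Fin m, (G ((k:ℕ)+1) - G (k:ℕ)) :=
          Finset.sum_congr rfl fun k _ => hGt k
      _ = ∑ i ∈ Finset.range m, (G (i+1) - G i) :=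
          Fin.sum_univ_eq_sum_range (fun i => G (i+1) - G i) m
      _ = G m - G 0 := Finset.sum_range_sub G m
      _ = ext x s - ext x r := by
          simp only [hG]
          rw [dif_pos (Nat.lt_succ_self m), dif_pos (Nat.succ_pos m)]
          have h1 : (⟨m, Nat.lt_succ_self m⟩ : Fin (m+1)) = Fin.last m := rfl
          have h2 : (⟨0, Nat.succ_pos m⟩ : Fin (m+1)) = 0 := rfl
          rw [h1, h2, hflast, hf0]
  -- combine
  have hprod : ∏ i : Fin n, (μ * Real.exp (ext x (σ i))) ≤
      ∏ i, (p i + ∑ j, A i j * Real.exp (x j)) :=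
    Finset.prod_le_prod
      (fun i _ => mul_nonneg hμpos.le (Real.exp_pos _).le)
      (fun i _ => key i)
  have hS : ∑ i, ext x (σ i) = (ext x s - ext x r) + γ := by
    have h1 := htel
    rw [Finset.sum_sub_distrib, hx] at h1
    linarith
  have heq : Real.exp (-γ) * ∏ i : Fin n, (μ * Real.exp (ext x (σ i)))
      = μ ^ n * Real.exp (ext x s - ext x r) := by
    rw [Finset.prod_mul_distrib, Finset.prod_const, Finset.card_univ,
      Fintype.card_fin, ← Real.exp_sum, hS, ← mul_assoc,
      mul_comm (Real.exp (-γ)) (μ ^ n), mul_assoc, ← Real.exp_add]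
    ring_nf
  calc μ ^ n * Real.exp (ext x s - ext x r)
      = Real.exp (-γ) * ∏ i : Fin n, (μ * Real.exp (ext x (σ i))) := heq.symm
    _ ≤ _ := mul_le_mul_of_nonneg_left hprod (Real.exp_pos _).le
end
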